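/- arXiv:2312.14142 — 4 statements merged into one kernel-verified Lean document; each statement's English description precedes it below -/
import Mathlib

section
/- Let A be a nonzero Hermitian complex matrix with trace zero, and let r denote the rank of A (so r ≥ 2). Then the operator norm of A is bounded by the Frobenius norm as ‖A‖_∞ ≤ √((r-1)/r) · ‖A‖_F. -/
/-- The operator (spectral) norm of a square complex matrix, i.e. the norm of the induced
continuous linear endomorphism of Euclidean space. -/
noncomputable def opNorm {D : ℕ} (A : Matrix (Fin D) (Fin D) ℂ) : ℝ :=
  ‖Matrix.toEuclideanCLM (𝕜 := ℂ) A‖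

/-- The Frobenius (Hilbert–Schmidt) norm of a Hermitian matrix, `√(Tr(A²))`. -/
noncomputable def frobNorm {D : ℕ} (A : Matrix (Fin D) (Fin D) ℂ) : ℝ :=
  Real.sqrt ((A * A).trace.re)

open Finset in
/-- Cauchy–Schwarz key step on the eigenvalue list. -/
lemma key_ineq {n : ℕ} (μ : Fin n → ℝ) (hsum : ∑ i, μ i = 0) (j : Fin n) :
    |μ j| ≤ Real.sqrt ((((univ.filter (fun i => μ i ≠ 0)).card : ℝ) - 1) /
      ((univ.filter (fun i => μ i ≠ 0)).card : ℝ)) * Real.sqrt (∑ i, μ i ^ 2) := by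
  set r : ℕ := (univ.filter (fun i => μ i ≠ 0)).card with hr
  by_cases hj : μ j = 0
  · rw [hj, abs_zero]; positivity
  · have hjmem : j ∈ univ.filter (fun i => μ i ≠ 0) := by simp [hj]
    have hr1 : 1 ≤ r := Finset.card_pos.mpr ⟨j, hjmem⟩
    set s := (univ.filter (fun i => μ i ≠ 0)).erase j with hs
    have hcard : (s.card : ℝ) = (r : ℝ) - 1 := by
      rw [hs, Finset.card_erase_of_mem hjmem, Nat.cast_sub hr1, Nat.cast_one]
    have hfiltersum : ∑ i ∈ univ.filter (fun i => μ i ≠ 0), μ i = ∑ i, μ i :=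
      Finset.sum_filter_of_ne (fun i _ h => h)
    have hsums : ∑ i ∈ s, μ i = -μ j := by
      have := Finset.sum_erase_add _ μ hjmem
      rw [← hs] at this
      have h0 : ∑ i ∈ s, μ i + μ j = 0 := by rw [this, hfiltersum, hsum]
      linarith
    have hfiltersq : ∑ i ∈ univ.filter (fun i => μ i ≠ 0), μ i ^ 2 = ∑ i, μ i ^ 2 :=
      Finset.sum_filter_of_ne (fun i _ h => by
        intro h0; exact h (by rw [h0]; ring))
    have hsqs : ∑ i ∈ s, μ i ^ 2 = (∑ i, μ i ^ 2) - μ j ^ 2 := by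
      have := Finset.sum_erase_add _ (fun i => μ i ^ 2) hjmem
      rw [← hs] at this
      rw [← hfiltersq, ← this]; ring
    have hCS : (∑ i ∈ s, μ i) ^ 2 ≤ (s.card : ℝ) * ∑ i ∈ s, μ i ^ 2 :=
      sq_sum_le_card_mul_sum_sq
    rw [hsums, hsqs, hcard, neg_sq] at hCS
    have hrpos : (0 : ℝ) < r := by exact_mod_cast hr1
    have hkey : μ j ^ 2 ≤ ((r : ℝ) - 1) / r * ∑ i, μ i ^ 2 := by
      rw [div_mul_eq_mul_div, le_div_iff₀ hrpos]
      nlinarith [hCS]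
    calc |μ j| = Real.sqrt (μ j ^ 2) := (Real.sqrt_sq_eq_abs _).symm
      _ ≤ Real.sqrt (((r : ℝ) - 1) / r * ∑ i, μ i ^ 2) := Real.sqrt_le_sqrt hkey
      _ = Real.sqrt (((r : ℝ) - 1) / r) * Real.sqrt (∑ i, μ i ^ 2) := by
          apply Real.sqrt_mul
          have h1r : (1:ℝ) ≤ r := by exact_mod_cast hr1
          have : (0:ℝ) < r := by linarith
          exact div_nonneg (by linarith) (by linarith)

open scoped Matrix.Norms.L2Operator in
/-- If every eigenvalue of a Hermitian matrix is bounded by `c` in absolute value, then so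
is the operator norm. -/
lemma opNorm_le_of_eigs {D : ℕ} (A : Matrix (Fin D) (Fin D) ℂ) (hA : A.IsHermitian)
    {c : ℝ} (hc : 0 ≤ c) (h : ∀ i, |hA.eigenvalues i| ≤ c) : opNorm A ≤ c := by
  rcases Nat.eq_zero_or_pos D with rfl | hD
  · have h0 : A = 0 := Subsingleton.elim _ _
    rw [h0]
    show ‖Matrix.toEuclideanCLM (𝕜 := ℂ) (0 : Matrix (Fin 0) (Fin 0) ℂ)‖ ≤ c
    rw [map_zero, norm_zero]
    exact hc
  · haveI : NeZero D := ⟨hD.ne'⟩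
    letI : CStarAlgebra (Matrix (Fin D) (Fin D) ℂ) := { }
    have hsa : IsSelfAdjoint A := hA
    have hnorm : opNorm A = ‖A‖ := rfl
    rw [hnorm]
    rcases CStarAlgebra.norm_or_neg_norm_mem_spectrum hsa with hmem | hmem
    · rw [hA.spectrum_real_eq_range_eigenvalues] at hmem
      obtain ⟨i, hi⟩ := hmem
      calc ‖A‖ = hA.eigenvalues i := hi.symm
        _ ≤ |hA.eigenvalues i| := le_abs_self _
        _ ≤ c := h i
    · rw [hA.spectrum_real_eq_range_eigenvalues] at hmem
      obtain ⟨i, hi⟩ := hmem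
      have h1 : ‖A‖ = -(hA.eigenvalues i) := by rw [hi]; ring
      calc ‖A‖ = -(hA.eigenvalues i) := h1
        _ ≤ |hA.eigenvalues i| := neg_le_abs _
        _ ≤ c := h i

/-- **Lemma 1**: for a nonzero trace-zero Hermitian matrix `A` of rank `r`,
`‖A‖_∞ ≤ √((r-1)/r) · ‖A‖_F`. -/
theorem opNorm_le_sqrt_rank_mul_frobNorm {D : ℕ} (A : Matrix (Fin D) (Fin D) ℂ)
    (hHerm : A.IsHermitian) (hne : A ≠ 0) (htr : A.trace = 0) :
    opNorm A ≤ Real.sqrt (((A.rank : ℝ) - 1) / (A.rank : ℝ)) * frobNorm A := by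
  classical
  set μ : Fin D → ℝ := hHerm.eigenvalues with hμ
  set V : Matrix (Fin D) (Fin D) ℂ := (hHerm.eigenvectorUnitary : Matrix (Fin D) (Fin D) ℂ)
    with hVdef
  have hV : star V * V = 1 := Matrix.mem_unitaryGroup_iff'.mp hHerm.eigenvectorUnitary.2
  set Dm : Matrix (Fin D) (Fin D) ℂ := Matrix.diagonal (RCLike.ofReal ∘ μ) with hDm
  -- trace A = sum of eigenvalues
  have htrace : A.trace = ∑ i, (μ i : ℂ) := by
    conv_lhs => rw [hHerm.spectral_theorem, Unitary.conjStarAlgAut_apply]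
    rw [Matrix.trace_mul_cycle, hV, one_mul, Matrix.trace_diagonal]
    rfl
  have hsum : ∑ i, μ i = 0 := by
    have : ((∑ i, μ i : ℝ) : ℂ) = 0 := by push_cast; rw [← htrace, htr]
    exact_mod_cast this
  -- trace (A*A) = sum of squares of eigenvalues
  have hAA : A * A = V * ((Dm * Dm) * star V) := by
    conv_lhs => rw [hHerm.spectral_theorem, Unitary.conjStarAlgAut_apply]
    calc (V * Dm * star V) * (V * Dm * star V)
        = V * (Dm * ((star V * V) * (Dm * star V))) := by simp only [mul_assoc]
      _ = V * ((Dm * Dm) * star V) := by rw [hV, one_mul, mul_assoc]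
  have htrsq : (A * A).trace = ((∑ i, μ i ^ 2 : ℝ) : ℂ) := by
    rw [hAA, Matrix.trace_mul_comm, mul_assoc, hV, mul_one, hDm,
      Matrix.diagonal_mul_diagonal, Matrix.trace_diagonal]
    push_cast
    exact Finset.sum_congr rfl fun i _ => by simp [sq]
  have hfrob : frobNorm A = Real.sqrt (∑ i, μ i ^ 2) := by
    rw [frobNorm, htrsq, Complex.ofReal_re]
  -- rank = number of nonzero eigenvalues
  have hrank : (A.rank : ℝ) = ((Finset.univ.filter (fun i => μ i ≠ 0)).card : ℝ) := by
    rw [hHerm.rank_eq_card_non_zero_eigs]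
    norm_cast
    exact Fintype.card_subtype _
  rw [hfrob, hrank]
  exact opNorm_le_of_eigs A hHerm (by positivity) (fun i => key_ineq μ hsum i)
end

section
/- Let n ≥ 1, d ≥ 1, D ≥ 1. For every family of quantum states ρ_x on ℂ^D indexed by strings x ∈ [d]^n, and every family of d-outcome POVMs (M_{b|y})_{b∈[d]} on ℂ^D indexed by y ∈ [n], the average success probability satisfies (1/(n dⁿ)) Σ_{x∈[d]^n} Σ_{y=1}^n Tr(ρ_x M_{x_y|y}) ≤ 1/d + (D-1)/√(n d D). -/
open scoped ComplexOrder

namespace QracAux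

open Complex Matrix

variable {D : ℕ}

/-- Real Frobenius inner product on complex matrices. -/
def ip (A B : Matrix (Fin D) (Fin D) ℂ) : ℝ :=
  ∑ i, ∑ j, ((A i j).re * (B i j).re + (A i j).im * (B i j).im)

lemma ip_comm (A B : Matrix (Fin D) (Fin D) ℂ) : ip A B = ip B A := by
  unfold ip; refine Finset.sum_congr rfl fun i _ => Finset.sum_congr rfl fun j _ => by ring

lemma ip_self_nonneg (A : Matrix (Fin D) (Fin D) ℂ) : 0 ≤ ip A A := by
  refine Finset.sum_nonneg fun i _ => Finset.sum_nonneg fun j _ => ?_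
  nlinarith [sq_nonneg (A i j).re, sq_nonneg (A i j).im]

lemma ip_add_left (A B C : Matrix (Fin D) (Fin D) ℂ) : ip (A + B) C = ip A C + ip B C := by
  unfold ip
  rw [← Finset.sum_add_distrib]
  refine Finset.sum_congr rfl fun i _ => ?_
  rw [← Finset.sum_add_distrib]
  refine Finset.sum_congr rfl fun j _ => ?_
  simp [Matrix.add_apply]; ring

lemma ip_sub_left (A B C : Matrix (Fin D) (Fin D) ℂ) : ip (A - B) C = ip A C - ip B C := by
  unfold ip
  rw [← Finset.sum_sub_distrib]
  refine Finset.sum_congr rfl fun i _ => ?_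
  rw [← Finset.sum_sub_distrib]
  refine Finset.sum_congr rfl fun j _ => ?_
  simp [Matrix.sub_apply]; ring

lemma ip_sub_right (A B C : Matrix (Fin D) (Fin D) ℂ) : ip A (B - C) = ip A B - ip A C := by
  rw [ip_comm, ip_sub_left, ip_comm B A, ip_comm C A]

lemma ip_smul_left (r : ℝ) (A B : Matrix (Fin D) (Fin D) ℂ) :
    ip ((r : ℂ) • A) B = r * ip A B := by
  unfold ip
  rw [Finset.mul_sum]
  refine Finset.sum_congr rfl fun i _ => ?_
  rw [Finset.mul_sum]
  refine Finset.sum_congr rfl fun j _ => ?_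
  simp [Matrix.smul_apply]
  ring

lemma ip_smul_right (r : ℝ) (A B : Matrix (Fin D) (Fin D) ℂ) :
    ip A ((r : ℂ) • B) = r * ip A B := by
  rw [ip_comm, ip_smul_left, ip_comm B A]

lemma ip_zero_left (B : Matrix (Fin D) (Fin D) ℂ) : ip 0 B = 0 := by
  unfold ip; simp

lemma ip_sum_left {ι : Type*} (s : Finset ι) (f : ι → Matrix (Fin D) (Fin D) ℂ)
    (B : Matrix (Fin D) (Fin D) ℂ) : ip (∑ k ∈ s, f k) B = ∑ k ∈ s, ip (f k) B := by
  classical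
  induction s using Finset.induction_on with
  | empty => simp [ip_zero_left]
  | insert _ _ h ih => rw [Finset.sum_insert h, Finset.sum_insert h, ip_add_left, ih]

lemma ip_sum_right {ι : Type*} (s : Finset ι) (f : ι → Matrix (Fin D) (Fin D) ℂ)
    (B : Matrix (Fin D) (Fin D) ℂ) : ip B (∑ k ∈ s, f k) = ∑ k ∈ s, ip B (f k) := by
  rw [ip_comm, ip_sum_left]
  exact Finset.sum_congr rfl fun k _ => ip_comm _ _


open Complex Matrix

variable {D : ℕ}

/-- coordinates of a matrix as a real vector -/
def coord (A : Matrix (Fin D) (Fin D) ℂ) (p : Fin D × Fin D × Bool) : ℝ :=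
  if p.2.2 then (A p.1 p.2.1).im else (A p.1 p.2.1).re

lemma ip_eq_sum_coord (A B : Matrix (Fin D) (Fin D) ℂ) :
    ip A B = ∑ p : Fin D × Fin D × Bool, coord A p * coord B p := by
  rw [Fintype.sum_prod_type]
  refine Finset.sum_congr rfl fun i _ => ?_
  rw [Fintype.sum_prod_type]
  refine Finset.sum_congr rfl fun j _ => ?_
  rw [Fintype.sum_bool]
  simp [coord]
  ring

lemma ip_cauchy (A B : Matrix (Fin D) (Fin D) ℂ) :
    ip A B ≤ Real.sqrt (ip A A) * Real.sqrt (ip B B) := by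
  rw [ip_eq_sum_coord, ip_eq_sum_coord, ip_eq_sum_coord]
  have := Real.sum_mul_le_sqrt_mul_sqrt Finset.univ (coord A) (coord B)
  simpa [pow_two] using this

/-- ip equals the real part of the trace of the product, when the second argument
is Hermitian. -/
lemma ip_eq_re_trace {A B : Matrix (Fin D) (Fin D) ℂ} (hB : B.IsHermitian) :
    ip A B = ((A * B).trace).re := by
  rw [Matrix.trace, Complex.re_sum]
  refine Finset.sum_congr rfl fun i _ => ?_
  rw [Matrix.diag_apply, Matrix.mul_apply, Complex.re_sum]
  refine Finset.sum_congr rfl fun j _ => ?_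
  have h : B j i = starRingEnd ℂ (B i j) := by
    conv_lhs => rw [← hB.apply j i]
    rfl
  rw [h]
  simp [Complex.mul_re]

lemma ip_one_right (A : Matrix (Fin D) (Fin D) ℂ) : ip A 1 = (A.trace).re := by
  unfold ip
  rw [Matrix.trace, Complex.re_sum]
  refine Finset.sum_congr rfl fun i _ => ?_
  rw [Finset.sum_eq_single i]
  · simp [Matrix.one_apply]
  · intro j _ hj
    simp [Matrix.one_apply, Ne.symm hj]
  · simp

lemma ip_one_one' : ip (1 : Matrix (Fin D) (Fin D) ℂ) 1 = D := by
  rw [ip_one_right]; simp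


open Complex Matrix

variable {D : ℕ}

lemma psd_diag {M : Matrix (Fin D) (Fin D) ℂ} (hM : M.PosSemidef) (i : Fin D) :
    0 ≤ M i i := by
  have h := hM.dotProduct_mulVec_nonneg (Pi.single i 1)
  simpa [Matrix.mulVec_single, dotProduct, Pi.single_apply] using h

lemma psd_diag_re {M : Matrix (Fin D) (Fin D) ℂ} (hM : M.PosSemidef) (i : Fin D) :
    0 ≤ (M i i).re := (Complex.le_def.1 (psd_diag hM i)).1

lemma psd_diag_im {M : Matrix (Fin D) (Fin D) ℂ} (hM : M.PosSemidef) (i : Fin D) :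
    (M i i).im = 0 := ((Complex.le_def.1 (psd_diag hM i)).2).symm

lemma psd_trace_re_nonneg {M : Matrix (Fin D) (Fin D) ℂ} (hM : M.PosSemidef) :
    0 ≤ (M.trace).re := by
  rw [Matrix.trace, Complex.re_sum]
  exact Finset.sum_nonneg fun i _ => psd_diag_re hM i

/-- entry bound: `|M i j|² ≤ M i i * M j j` for PSD `M`. -/
lemma psd_entry_bound {M : Matrix (Fin D) (Fin D) ℂ} (hM : M.PosSemidef) (i j : Fin D) :
    Complex.normSq (M i j) ≤ (M i i).re * (M j j).re := by
  rcases eq_or_ne i j with rfl | hij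
  · rw [Complex.normSq_apply, psd_diag_im hM i]
    nlinarith [psd_diag_re hM i]
  -- i ≠ j
  set b := M i j with hb
  have hji : M j i = starRingEnd ℂ b := by
    conv_lhs => rw [← hM.1.apply j i]
    rfl
  have key : ∀ t : ℝ, 0 ≤ (M i i).re * (t * t) + (-2 * Complex.normSq b) * t
      + Complex.normSq b * (M j j).re := by
    intro t
    set x : Fin D → ℂ := fun k => if k = i then (t : ℂ) else if k = j then -starRingEnd ℂ b else 0
      with hx
    have h := hM.dotProduct_mulVec_nonneg x
    have hinner : ∀ k, (M *ᵥ x) k = M k i * (t : ℂ) + M k j * (-starRingEnd ℂ b) := by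
      intro k
      rw [Matrix.mulVec, dotProduct]
      rw [Finset.sum_eq_add_of_mem i j (Finset.mem_univ i) (Finset.mem_univ j) hij
        (by intro c _ hc; simp [hx, hc.1, hc.2])]
      simp [hx, hij, Ne.symm hij]
    have houter : star x ⬝ᵥ (M *ᵥ x) =
        (t : ℂ) * (M i i * (t : ℂ) + M i j * (-starRingEnd ℂ b))
        + (-b) * (M j i * (t : ℂ) + M j j * (-starRingEnd ℂ b)) := by
      rw [dotProduct]
      rw [Finset.sum_eq_add_of_mem i j (Finset.mem_univ i) (Finset.mem_univ j) hij
        (by intro c _ hc; simp [hx, hc.1, hc.2])]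
      rw [hinner i, hinner j]
      simp [hx, hij, Ne.symm hij]
    have hQ : star x ⬝ᵥ (M *ᵥ x) = (t : ℂ)^2 * M i i - 2 * (t:ℂ) * (Complex.normSq b : ℂ)
        + (Complex.normSq b : ℂ) * M j j := by
      rw [houter, hji, ← hb]
      have h1 : b * starRingEnd ℂ b = (Complex.normSq b : ℂ) := Complex.mul_conj b
      linear_combination (M j j - 2 * (t:ℂ)) * h1
    have h0 : 0 ≤ ((t : ℂ)^2 * M i i - 2 * (t:ℂ) * (Complex.normSq b : ℂ)
        + (Complex.normSq b : ℂ) * M j j) := hQ ▸ h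
    have hre := (Complex.le_def.1 h0).1
    simp [Complex.add_re, Complex.sub_re, Complex.mul_re, Complex.ofReal_re, Complex.ofReal_im,
      ← Complex.ofReal_pow, psd_diag_im hM i, psd_diag_im hM j] at hre
    nlinarith [hre]
  have hd := discrim_le_zero key
  rw [discrim] at hd
  set nb := Complex.normSq b
  have hnb : 0 ≤ nb := Complex.normSq_nonneg b
  rcases eq_or_lt_of_le hnb with h0 | hpos
  · rw [← h0]
    exact mul_nonneg (psd_diag_re hM i) (psd_diag_re hM j)
  · have h4 : nb * nb ≤ ((M i i).re * (M j j).re) * nb := by nlinarith [hd]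
    linarith [le_of_mul_le_mul_right h4 hpos]

open Complex Matrix
variable {D : ℕ}

lemma ip_self_le_sq_trace {M : Matrix (Fin D) (Fin D) ℂ} (hM : M.PosSemidef) :
    ip M M ≤ ((M.trace).re) ^ 2 := by
  have h1 : ip M M ≤ ∑ i, ∑ j, (M i i).re * (M j j).re := by
    refine Finset.sum_le_sum fun i _ => Finset.sum_le_sum fun j _ => ?_
    have := psd_entry_bound hM i j
    rw [Complex.normSq_apply] at this
    linarith
  have h2 : ∑ i, ∑ j, (M i i).re * (M j j).re = ((M.trace).re) ^ 2 := by
    rw [Matrix.trace, Complex.re_sum, sq, Finset.sum_mul_sum]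
    rfl
  linarith
lemma trace_mul_re_nonneg {A B : Matrix (Fin D) (Fin D) ℂ}
    (hA : A.PosSemidef) (hB : B.PosSemidef) : 0 ≤ ((A * B).trace).re := by
  obtain ⟨C, rfl⟩ : ∃ C : Matrix (Fin D) (Fin D) ℂ, A = Cᴴ * C := by
    open scoped MatrixOrder in exact CStarAlgebra.nonneg_iff_eq_star_mul_self.mp hA.nonneg
  have h1 : (Cᴴ * C * B).trace = (C * B * Cᴴ).trace := by
    rw [Matrix.trace_mul_cycle C B Cᴴ]
  rw [h1, Matrix.trace, Complex.re_sum]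
  exact Finset.sum_nonneg fun i _ => psd_diag_re (hB.mul_mul_conjTranspose_same C) i

lemma ip_self_le_trace {M : Matrix (Fin D) (Fin D) ℂ} (hM : M.PosSemidef)
    (h1M : (1 - M).PosSemidef) : ip M M ≤ (M.trace).re := by
  have h := trace_mul_re_nonneg hM h1M
  rw [Matrix.mul_sub, Matrix.mul_one, Matrix.trace_sub, Complex.sub_re] at h
  rw [ip_eq_re_trace hM.1]
  linarith


lemma card_ne {ι : Type*} [Fintype ι] [DecidableEq ι] (y : ι) :
    Fintype.card {j : ι // j ≠ y} = Fintype.card ι - 1 := by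
  simp [Ne, Fintype.card_subtype_compl, Fintype.card_subtype_eq]

lemma sum_eval_gen {d : ℕ} {ι : Type*} [Fintype ι] [DecidableEq ι] (y : ι) (f : Fin d → ℝ) :
    ∑ x : ι → Fin d, f (x y) = (d : ℝ) ^ (Fintype.card ι - 1) * ∑ b, f b := by
  have h1 : ∑ x : ι → Fin d, f (x y)
      = ∑ p : Fin d × ({j : ι // j ≠ y} → Fin d), f p.1 :=
    Fintype.sum_equiv (Equiv.funSplitAt y (Fin d)) _ _ (fun x => rfl)
  rw [h1, Fintype.sum_prod_type]
  have hc : Fintype.card ({j : ι // j ≠ y} → Fin d) = d ^ (Fintype.card ι - 1) := by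
    rw [Fintype.card_fun, Fintype.card_fin, card_ne]
  calc ∑ a : Fin d, ∑ _g : {j : ι // j ≠ y} → Fin d, f a
      = ∑ a : Fin d, (d : ℝ) ^ (Fintype.card ι - 1) * f a := by
        refine Finset.sum_congr rfl fun a _ => ?_
        rw [Finset.sum_const, Finset.card_univ, hc, nsmul_eq_mul]
        push_cast
        ring
    _ = _ := by rw [← Finset.mul_sum]

lemma sum_eval_two {n d : ℕ} (y y' : Fin n) (h : y' ≠ y) (F : Fin d → Fin d → ℝ) :
    ∑ x : Fin n → Fin d, F (x y) (x y') = (d : ℝ) ^ (n - 2) * ∑ b, ∑ b', F b b' := by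
  have h1 : ∑ x : Fin n → Fin d, F (x y) (x y')
      = ∑ p : Fin d × ({j : Fin n // j ≠ y} → Fin d), F p.1 (p.2 ⟨y', h⟩) :=
    Fintype.sum_equiv (Equiv.funSplitAt y (Fin d)) _ _ (fun x => rfl)
  rw [h1, Fintype.sum_prod_type]
  have hcard : Fintype.card {j : Fin n // j ≠ y} - 1 = n - 2 := by
    rw [card_ne, Fintype.card_fin, Nat.sub_sub]
  calc ∑ a : Fin d, ∑ g : {j : Fin n // j ≠ y} → Fin d, F a (g ⟨y', h⟩)
      = ∑ a : Fin d, (d : ℝ) ^ (n - 2) * ∑ b', F a b' := by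
        refine Finset.sum_congr rfl fun a _ => ?_
        have h2 := sum_eval_gen (ι := {j : Fin n // j ≠ y}) ⟨y', h⟩ (fun b => F a b)
        rw [hcard] at h2
        exact h2
    _ = _ := by rw [← Finset.mul_sum]

noncomputable def mval (Q : Matrix (Fin D) (Fin D) ℂ) : ℝ := (Q.trace).re
noncomputable def hat (Q : Matrix (Fin D) (Fin D) ℂ) : Matrix (Fin D) (Fin D) ℂ :=
  Q - ((mval Q / D : ℝ) : ℂ) • 1
noncomputable def cent (P : Matrix (Fin D) (Fin D) ℂ) : Matrix (Fin D) (Fin D) ℂ :=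
  P - (((D : ℝ)⁻¹ : ℝ) : ℂ) • 1


open Complex Matrix
variable {D : ℕ}

lemma herm_smul_one (r : ℝ) : ((r : ℂ) • (1 : Matrix (Fin D) (Fin D) ℂ)).IsHermitian := by
  unfold Matrix.IsHermitian
  rw [Matrix.conjTranspose_smul, Matrix.conjTranspose_one]
  simp

lemma ip_sub_smul_expand (A B : Matrix (Fin D) (Fin D) ℂ) (r s : ℝ) :
    ip (A - (r : ℂ) • 1) (B - (s : ℂ) • 1)
      = ip A B - s * ip A 1 - r * ip B 1 + r * s * D := by
  rw [ip_sub_left, ip_sub_right, ip_sub_right, ip_smul_right, ip_smul_left, ip_smul_left,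
    ip_smul_right, ip_comm (1 : Matrix (Fin D) (Fin D) ℂ) B, ip_one_one']
  ring

lemma decomp (hD : 0 < D) {P Q : Matrix (Fin D) (Fin D) ℂ}
    (hQ : Q.IsHermitian) (hPtr : (P.trace).re = 1) :
    ((P * Q).trace).re = mval Q / D + ip (cent P) (hat Q) := by
  unfold mval cent hat
  rw [ip_sub_smul_expand, ← ip_eq_re_trace hQ, ip_one_right, ip_one_right, hPtr]
  have hD0 : (D : ℝ) ≠ 0 := Nat.cast_ne_zero.2 hD.ne'
  field_simp
  ring

lemma sigma_bound (hD : 0 < D) {P : Matrix (Fin D) (Fin D) ℂ}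
    (hP : P.PosSemidef) (hPtr : (P.trace).re = 1) :
    ip (cent P) (cent P) ≤ 1 - 1 / (D : ℝ) := by
  unfold cent
  rw [ip_sub_smul_expand, ip_one_right, hPtr]
  have hD0 : (D : ℝ) ≠ 0 := Nat.cast_ne_zero.2 hD.ne'
  have h1 := ip_self_le_sq_trace hP
  rw [hPtr] at h1
  have h2 : (D:ℝ)⁻¹ * ((D:ℝ)⁻¹) * (D:ℝ) = 1/(D:ℝ) := by field_simp
  linarith [h1, h2, one_div (D:ℝ)]

lemma aux_ineq {e m q : ℝ} (he : 1 ≤ e) (hm : 0 ≤ m) (h1 : q ≤ m ^ 2) (h2 : q ≤ m) :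
    q - m ^ 2 / e ≤ (1 - 1 / e) * m := by
  have he0 : (0:ℝ) < e := lt_of_lt_of_le one_pos he
  have key : q * e - m ^ 2 ≤ (e - 1) * m := by
    rcases le_total m 1 with h | h
    · nlinarith
    · nlinarith
  calc q - m ^ 2 / e = (q * e - m ^ 2) / e := by field_simp
    _ ≤ ((e - 1) * m) / e := by gcongr
    _ = (1 - 1 / e) * m := by field_simp

lemma hat_bound (hD : 0 < D) {Q : Matrix (Fin D) (Fin D) ℂ}
    (hQ : Q.PosSemidef) (h1Q : (1 - Q).PosSemidef) :
    ip (hat Q) (hat Q) ≤ (1 - 1 / (D : ℝ)) * mval Q := by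
  unfold hat mval
  rw [ip_sub_smul_expand, ip_one_right]
  have hD0 : (D : ℝ) ≠ 0 := Nat.cast_ne_zero.2 hD.ne'
  set m := (Q.trace).re with hm
  have hL : ip Q Q - m / D * m - m / D * m + m / D * (m / D) * D
      = ip Q Q - m ^ 2 / D := by field_simp; ring
  rw [hL]
  exact aux_ineq (by exact_mod_cast hD) (psd_trace_re_nonneg hQ)
    (ip_self_le_sq_trace hQ) (ip_self_le_trace hQ h1Q)

lemma psd_sum {ι : Type*} (s : Finset ι) (f : ι → Matrix (Fin D) (Fin D) ℂ)
    (hf : ∀ i ∈ s, (f i).PosSemidef) : (∑ i ∈ s, f i).PosSemidef := by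
  classical
  induction s using Finset.induction_on with
  | empty => simpa using Matrix.PosSemidef.zero
  | insert _ _ h ih =>
      rw [Finset.sum_insert h]
      exact Matrix.PosSemidef.add (hf _ (Finset.mem_insert_self _ _))
        (ih fun i hi => hf i (Finset.mem_insert_of_mem hi))


end QracAux

/-- A quantum state on `ℂ^D`: a `D×D` positive semidefinite complex matrix of trace one. -/
def IsState {D : ℕ} (ρ : Matrix (Fin D) (Fin D) ℂ) : Prop :=
  ρ.PosSemidef ∧ ρ.trace = 1

/-- A `d`-outcome POVM on `ℂ^D`: a family of `D×D` positive semidefinite complex matrices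
summing to the identity. -/
def IsPOVM {d D : ℕ} (M : Fin d → Matrix (Fin D) (Fin D) ℂ) : Prop :=
  (∀ b, (M b).PosSemidef) ∧ ∑ b, M b = 1

open QracAux in
/-- **Result 1**: the average success probability of any quantum random access code with
`n` inputs from a `d`-letter alphabet and message dimension `D` is at most
`1/d + (D-1)/√(ndD)`. -/
theorem qrac_bound_one {n d D : ℕ} (hn : 1 ≤ n) (hd : 1 ≤ d) (hD : 1 ≤ D)
    (ρ : (Fin n → Fin d) → Matrix (Fin D) (Fin D) ℂ)
    (M : Fin n → Fin d → Matrix (Fin D) (Fin D) ℂ)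
    (hρ : ∀ x, IsState (ρ x))
    (hM : ∀ y, IsPOVM (M y)) :
    (1 / ((n : ℝ) * (d : ℝ) ^ n)) *
        ∑ x : Fin n → Fin d, ∑ y : Fin n, ((ρ x * M y (x y)).trace).re
      ≤ 1 / (d : ℝ) + ((D : ℝ) - 1) / Real.sqrt ((n : ℝ) * (d : ℝ) * (D : ℝ)) := by
  classical
  have hn0 : (0:ℝ) < n := by exact_mod_cast hn
  have hd0 : (0:ℝ) < d := by exact_mod_cast hd
  have hD0 : (0:ℝ) < D := by exact_mod_cast hD
  have hD1 : (1:ℝ) ≤ D := by exact_mod_cast hD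
  have hDn : 0 < D := hD
  have hpsd : ∀ y b, (M y b).PosSemidef := fun y b => (hM y).1 b
  have hsum1 : ∀ y, ∑ b, M y b = 1 := fun y => (hM y).2
  have hρtr : ∀ x, ((ρ x).trace).re = 1 := fun x => by rw [(hρ x).2]; simp
  have h1M : ∀ y b, ((1 : Matrix (Fin D) (Fin D) ℂ) - M y b).PosSemidef := by
    intro y b
    have h : (1 : Matrix (Fin D) (Fin D) ℂ) - M y b
        = ∑ b' ∈ Finset.univ.erase b, M y b' := by
      rw [← hsum1 y, ← Finset.sum_erase_add Finset.univ (M y) (Finset.mem_univ b)]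
      rw [add_sub_cancel_right]
    rw [h]
    exact psd_sum _ _ (fun i _ => hpsd y i)
  have hmD : ∀ y, ∑ b, mval (M y b) = D := by
    intro y
    have h1 := congrArg Matrix.trace (hsum1 y)
    rw [Matrix.trace_sum, Matrix.trace_one] at h1
    have h2 := congrArg Complex.re h1
    rw [Complex.re_sum] at h2
    simpa [mval] using h2
  have hhat0 : ∀ y, ∑ b, hat (M y b) = 0 := by
    intro y
    unfold hat
    rw [Finset.sum_sub_distrib, hsum1 y, ← Finset.sum_smul]
    have h : (∑ b, ((mval (M y b) / D : ℝ) : ℂ)) = 1 := by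
      rw [← Complex.ofReal_sum, ← Finset.sum_div, hmD y, div_self (ne_of_gt hD0),
        Complex.ofReal_one]
    rw [h, one_smul, sub_self]
  -- the three main quantities
  set S := ∑ x : Fin n → Fin d, ∑ y : Fin n, ((ρ x * M y (x y)).trace).re with hS
  set A : (Fin n → Fin d) → Matrix (Fin D) (Fin D) ℂ :=
    fun x => ∑ y, hat (M y (x y)) with hA
  -- decomposition
  have S_eq : S = (∑ x : Fin n → Fin d, ∑ y : Fin n, mval (M y (x y)) / D)
      + ∑ x : Fin n → Fin d, ip (cent (ρ x)) (A x) := by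
    rw [hS, ← Finset.sum_add_distrib]
    refine Finset.sum_congr rfl fun x _ => ?_
    rw [hA, ip_sum_right, ← Finset.sum_add_distrib]
    exact Finset.sum_congr rfl fun y _ => decomp hDn (hpsd y (x y)).1 (hρtr x)
  -- first term
  have T1_eq : (∑ x : Fin n → Fin d, ∑ y : Fin n, mval (M y (x y)) / D)
      = (n : ℝ) * (d : ℝ) ^ (n - 1) := by
    rw [Finset.sum_comm]
    have hy : ∀ y : Fin n, (∑ x : Fin n → Fin d, mval (M y (x y)) / D)
        = (d : ℝ) ^ (n - 1) := by
      intro y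
      have h := sum_eval_gen (ι := Fin n) y (fun b => mval (M y b) / (D:ℝ))
      rw [Fintype.card_fin] at h
      rw [h, ← Finset.sum_div, hmD y, div_self (ne_of_gt hD0), mul_one]
    rw [Finset.sum_congr rfl fun y _ => hy y, Finset.sum_const, Finset.card_univ,
      Fintype.card_fin, nsmul_eq_mul]
  -- third quantity
  have T3_le : (∑ x : Fin n → Fin d, ip (A x) (A x))
      ≤ (n : ℝ) * (d : ℝ) ^ (n - 1) * ((D : ℝ) - 1) := by
    have expand : ∀ x, ip (A x) (A x)
        = ∑ y : Fin n, ∑ y' : Fin n, ip (hat (M y (x y))) (hat (M y' (x y'))) := by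
      intro x
      rw [hA, ip_sum_left]
      exact Finset.sum_congr rfl fun y _ => ip_sum_right _ _ _
    rw [Finset.sum_congr rfl fun x _ => expand x, Finset.sum_comm]
    have hy : ∀ y : Fin n,
        (∑ x : Fin n → Fin d, ∑ y' : Fin n, ip (hat (M y (x y))) (hat (M y' (x y'))))
        ≤ (d : ℝ) ^ (n - 1) * ((D : ℝ) - 1) := by
      intro y
      rw [Finset.sum_comm]
      rw [← Finset.sum_erase_add Finset.univ _ (Finset.mem_univ y)]
      have hzero : ∀ y' ∈ Finset.univ.erase y,
          (∑ x : Fin n → Fin d, ip (hat (M y (x y))) (hat (M y' (x y')))) = 0 := by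
        intro y' hy'
        have hne : y' ≠ y := Finset.ne_of_mem_erase hy'
        rw [sum_eval_two y y' hne (fun b b' => ip (hat (M y b)) (hat (M y' b')))]
        have h2 : (∑ b, ∑ b', ip (hat (M y b)) (hat (M y' b')))
            = ip (∑ b, hat (M y b)) (∑ b', hat (M y' b')) := by
          rw [ip_sum_left]
          exact Finset.sum_congr rfl fun b _ => (ip_sum_right _ _ _).symm
        rw [h2, hhat0 y, ip_zero_left, mul_zero]
      rw [Finset.sum_eq_zero hzero, zero_add]
      have hdiag : (∑ x : Fin n → Fin d, ip (hat (M y (x y))) (hat (M y (x y))))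
          = (d : ℝ) ^ (n - 1) * ∑ b, ip (hat (M y b)) (hat (M y b)) := by
        have h := sum_eval_gen (ι := Fin n) y (fun b => ip (hat (M y b)) (hat (M y b)))
        rw [Fintype.card_fin] at h
        exact h
      rw [hdiag]
      have hsumb : (∑ b, ip (hat (M y b)) (hat (M y b))) ≤ (D : ℝ) - 1 := by
        calc (∑ b, ip (hat (M y b)) (hat (M y b)))
            ≤ ∑ b, (1 - 1 / (D:ℝ)) * mval (M y b) :=
              Finset.sum_le_sum fun b _ => hat_bound hDn (hpsd y b) (h1M y b)
          _ = (1 - 1 / (D:ℝ)) * ∑ b, mval (M y b) := by rw [Finset.mul_sum]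
          _ = (1 - 1 / (D:ℝ)) * D := by rw [hmD y]
          _ = (D : ℝ) - 1 := by field_simp
      calc (d : ℝ) ^ (n - 1) * ∑ b, ip (hat (M y b)) (hat (M y b))
          ≤ (d : ℝ) ^ (n - 1) * ((D:ℝ) - 1) := by
            apply mul_le_mul_of_nonneg_left hsumb (by positivity)
        _ = _ := rfl
    calc (∑ y : Fin n, ∑ x : Fin n → Fin d, ∑ y' : Fin n,
            ip (hat (M y (x y))) (hat (M y' (x y'))))
        ≤ ∑ y : Fin n, (d : ℝ) ^ (n - 1) * ((D : ℝ) - 1) := Finset.sum_le_sum fun y _ => hy y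
      _ = (n : ℝ) * (d : ℝ) ^ (n - 1) * ((D : ℝ) - 1) := by
          rw [Finset.sum_const, Finset.card_univ, Fintype.card_fin, nsmul_eq_mul]; ring
  -- second term bound
  have T2_le : (∑ x : Fin n → Fin d, ip (cent (ρ x)) (A x))
      ≤ Real.sqrt (1 - 1/(D:ℝ)) * ∑ x : Fin n → Fin d, Real.sqrt (ip (A x) (A x)) := by
    rw [Finset.mul_sum]
    refine Finset.sum_le_sum fun x _ => ?_
    calc ip (cent (ρ x)) (A x)
        ≤ Real.sqrt (ip (cent (ρ x)) (cent (ρ x))) * Real.sqrt (ip (A x) (A x)) :=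
          ip_cauchy _ _
      _ ≤ Real.sqrt (1 - 1/(D:ℝ)) * Real.sqrt (ip (A x) (A x)) := by
          apply mul_le_mul_of_nonneg_right _ (Real.sqrt_nonneg _)
          exact Real.sqrt_le_sqrt (sigma_bound hDn (hρ x).1 (hρtr x))
  have sumsqrt_le : (∑ x : Fin n → Fin d, Real.sqrt (ip (A x) (A x)))
      ≤ Real.sqrt ((d:ℝ)^n) * Real.sqrt (∑ x : Fin n → Fin d, ip (A x) (A x)) := by
    have h := Real.sum_sqrt_mul_sqrt_le (Finset.univ (α := Fin n → Fin d))
      (f := fun _ => (1:ℝ)) (g := fun x => ip (A x) (A x))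
      (fun _ => zero_le_one) (fun x => ip_self_nonneg _)
    simp only [Real.sqrt_one, one_mul] at h
    have hcard : (∑ _x : Fin n → Fin d, (1:ℝ)) = (d:ℝ)^n := by
      rw [Finset.sum_const, Finset.card_univ, Fintype.card_fun, Fintype.card_fin,
        Fintype.card_fin, nsmul_eq_mul, mul_one]
      push_cast
      ring
    rw [hcard] at h
    exact h
  -- put it together
  set s := Real.sqrt ((n:ℝ) * (d:ℝ) * (D:ℝ)) with hs
  have hs0 : 0 < s := Real.sqrt_pos.2 (by positivity)
  have hbig : Real.sqrt (1 - 1/(D:ℝ)) * (Real.sqrt ((d:ℝ)^n)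
      * Real.sqrt ((n : ℝ) * (d : ℝ) ^ (n - 1) * ((D : ℝ) - 1)))
      = (n:ℝ) * (d:ℝ)^n * (((D:ℝ) - 1) / s) := by
    have h1D : (0:ℝ) ≤ 1 - 1/(D:ℝ) := by
      rw [sub_nonneg, div_le_one hD0]
      exact hD1
    rw [← Real.sqrt_mul (by positivity), ← Real.sqrt_mul h1D]
    have hs2 : s^2 = (n:ℝ) * (d:ℝ) * (D:ℝ) := Real.sq_sqrt (by positivity)
    have hdn : (d:ℝ)^n = (d:ℝ)^(n-1) * (d:ℝ) := by
      rw [← pow_succ, Nat.sub_add_cancel hn]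
    have hval : (1 - 1/(D:ℝ)) * ((d:ℝ)^n * ((n : ℝ) * (d : ℝ) ^ (n - 1) * ((D : ℝ) - 1)))
        = ((n:ℝ) * (d:ℝ)^n * (((D:ℝ) - 1) / s))^2 := by
      rw [mul_pow, mul_pow, div_pow, hs2, hdn]
      field_simp
    have hnn : (0:ℝ) ≤ (n:ℝ) * (d:ℝ)^n * (((D:ℝ) - 1) / s) := by
      have hD1' : (0:ℝ) ≤ (D:ℝ) - 1 := by linarith
      positivity
    rw [hval, Real.sqrt_sq hnn]
  have hfinal : S ≤ (n : ℝ) * (d : ℝ) ^ (n - 1) + (n:ℝ) * (d:ℝ)^n * (((D:ℝ) - 1) / s) := by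
    rw [S_eq, T1_eq]
    have h2 : (∑ x : Fin n → Fin d, ip (cent (ρ x)) (A x))
        ≤ (n:ℝ) * (d:ℝ)^n * (((D:ℝ) - 1) / s) := by
      calc (∑ x : Fin n → Fin d, ip (cent (ρ x)) (A x))
          ≤ Real.sqrt (1 - 1/(D:ℝ)) * ∑ x : Fin n → Fin d, Real.sqrt (ip (A x) (A x)) := T2_le
        _ ≤ Real.sqrt (1 - 1/(D:ℝ)) * (Real.sqrt ((d:ℝ)^n)
            * Real.sqrt (∑ x : Fin n → Fin d, ip (A x) (A x))) := by
            apply mul_le_mul_of_nonneg_left sumsqrt_le (Real.sqrt_nonneg _)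
        _ ≤ Real.sqrt (1 - 1/(D:ℝ)) * (Real.sqrt ((d:ℝ)^n)
            * Real.sqrt ((n : ℝ) * (d : ℝ) ^ (n - 1) * ((D : ℝ) - 1))) := by
            apply mul_le_mul_of_nonneg_left _ (Real.sqrt_nonneg _)
            apply mul_le_mul_of_nonneg_left _ (Real.sqrt_nonneg _)
            exact Real.sqrt_le_sqrt T3_le
        _ = (n:ℝ) * (d:ℝ)^n * (((D:ℝ) - 1) / s) := hbig
    linarith
  have hdenom : (0:ℝ) < (n : ℝ) * (d : ℝ) ^ n := by positivity
  have hdn : (d:ℝ)^n = (d:ℝ)^(n-1) * (d:ℝ) := by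
    rw [← pow_succ, Nat.sub_add_cancel hn]
  calc (1 / ((n : ℝ) * (d : ℝ) ^ n)) * S
      ≤ (1 / ((n : ℝ) * (d : ℝ) ^ n))
        * ((n : ℝ) * (d : ℝ) ^ (n - 1) + (n:ℝ) * (d:ℝ)^n * (((D:ℝ) - 1) / s)) := by
        apply mul_le_mul_of_nonneg_left hfinal (by positivity)
    _ = 1 / (d : ℝ) + ((D : ℝ) - 1) / s := by
        rw [hdn]
        field_simp
end

section
/- Let n ≥ 1, d ≥ 1, D ≥ 1. For every family of quantum states ρ_x on ℂ^D indexed by strings x ∈ [d]^n, and every family of d-outcome POVMs (M_{b|y})_{b∈[d]} on ℂ^D indexed by y ∈ [n], the average success probability satisfies (1/(n dⁿ)) Σ_{x∈[d]^n} Σ_{y=1}^n Tr(ρ_x M_{x_y|y}) ≤ (1/n)·(1 + (n-1)·√D/d). -/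
open scoped ComplexOrder

open Matrix Finset Complex

variable {D : ℕ}

noncomputable def frob2 (B : Matrix (Fin D) (Fin D) ℂ) : ℝ :=
  ∑ p : Fin D × Fin D, Complex.normSq (B p.1 p.2)

lemma frob2_nonneg (B : Matrix (Fin D) (Fin D) ℂ) : 0 ≤ frob2 B :=
  Finset.sum_nonneg fun _ _ => Complex.normSq_nonneg _

lemma trace_ctm (B C : Matrix (Fin D) (Fin D) ℂ) :
    (Bᴴ * C).trace = ∑ p : Fin D × Fin D, (starRingEnd ℂ) (B p.1 p.2) * C p.1 p.2 := by
  rw [Fintype.sum_prod_type, Matrix.trace]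
  simp only [Matrix.diag, Matrix.mul_apply, Matrix.conjTranspose_apply]
  exact Finset.sum_comm

lemma re_trace_ctm_self (B : Matrix (Fin D) (Fin D) ℂ) :
    ((Bᴴ * B).trace).re = frob2 B := by
  rw [trace_ctm, Complex.re_sum]
  unfold frob2
  refine Finset.sum_congr rfl fun p _ => ?_
  rw [← Complex.normSq_eq_conj_mul_self]
  simp

lemma abs_trace_ctm_le (B C : Matrix (Fin D) (Fin D) ℂ) :
    ‖(Bᴴ * C).trace‖ ≤ Real.sqrt (frob2 B) * Real.sqrt (frob2 C) := by
  rw [trace_ctm]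
  refine le_trans (norm_sum_le _ _) ?_
  have h : ∀ p : Fin D × Fin D, ‖(starRingEnd ℂ) (B p.1 p.2) * C p.1 p.2‖
      = ‖B p.1 p.2‖ * ‖C p.1 p.2‖ := by
    intro p; rw [norm_mul, Complex.norm_conj]
  rw [Finset.sum_congr rfl fun p _ => h p]
  have := Real.sum_mul_le_sqrt_mul_sqrt (univ : Finset (Fin D × Fin D))
    (fun p => ‖B p.1 p.2‖) (fun p => ‖C p.1 p.2‖)
  simpa [Complex.sq_norm, frob2] using this

lemma frob2_mul_le (X Y : Matrix (Fin D) (Fin D) ℂ) :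
    frob2 (X * Y) ≤ frob2 X * frob2 Y := by
  unfold frob2
  have key : ∀ p : Fin D × Fin D, Complex.normSq ((X * Y) p.1 p.2)
      ≤ (∑ k, Complex.normSq (X p.1 k)) * (∑ k, Complex.normSq (Y k p.2)) := by
    intro p
    have h1 : ‖(X * Y) p.1 p.2‖ ≤ ∑ k, ‖X p.1 k‖ * ‖Y k p.2‖ := by
      rw [Matrix.mul_apply]
      refine le_trans (norm_sum_le _ _) ?_
      refine Finset.sum_le_sum fun k _ => ?_
      rw [norm_mul]
    have h2 : (∑ k, ‖X p.1 k‖ * ‖Y k p.2‖)^2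
        ≤ (∑ k, ‖X p.1 k‖^2) * (∑ k, ‖Y k p.2‖^2) :=
      Finset.sum_mul_sq_le_sq_mul_sq _ _ _
    have h0 : (0:ℝ) ≤ ‖(X * Y) p.1 p.2‖ := norm_nonneg _
    calc Complex.normSq ((X * Y) p.1 p.2) = ‖(X * Y) p.1 p.2‖ ^ 2 := (Complex.sq_norm _).symm
      _ ≤ (∑ k, ‖X p.1 k‖ * ‖Y k p.2‖)^2 := by
          apply pow_le_pow_left₀ h0 h1
      _ ≤ (∑ k, ‖X p.1 k‖^2) * (∑ k, ‖Y k p.2‖^2) := h2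
      _ = (∑ k, Complex.normSq (X p.1 k)) * (∑ k, Complex.normSq (Y k p.2)) := by
          simp [Complex.sq_norm]
  calc ∑ p : Fin D × Fin D, Complex.normSq ((X * Y) p.1 p.2)
      ≤ ∑ p : Fin D × Fin D, (∑ k, Complex.normSq (X p.1 k)) * (∑ k, Complex.normSq (Y k p.2)) :=
        Finset.sum_le_sum fun p _ => key p
    _ = (∑ i, ∑ k, Complex.normSq (X i k)) * (∑ j, ∑ k, Complex.normSq (Y k j)) := by
        rw [Fintype.sum_prod_type]
        simp only []
        rw [← Finset.sum_mul_sum]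
    _ = (∑ p : Fin D × Fin D, Complex.normSq (X p.1 p.2)) * (∑ p : Fin D × Fin D, Complex.normSq (Y p.1 p.2)) := by
        rw [Fintype.sum_prod_type, Fintype.sum_prod_type]
        congr 1
        exact Finset.sum_comm

namespace Matrix.PosSemidef

noncomputable def sqrt {P : Matrix (Fin D) (Fin D) ℂ} (hP : P.PosSemidef) :
    Matrix (Fin D) (Fin D) ℂ :=
  (hP.1.eigenvectorUnitary : Matrix (Fin D) (Fin D) ℂ) *
    diagonal (fun i => ((Real.sqrt (hP.1.eigenvalues i) : ℝ) : ℂ)) *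
    star (hP.1.eigenvectorUnitary : Matrix (Fin D) (Fin D) ℂ)

lemma sqrt_mul_self {P : Matrix (Fin D) (Fin D) ℂ} (hP : P.PosSemidef) :
    hP.sqrt * hP.sqrt = P := by
  have hU : star (hP.1.eigenvectorUnitary : Matrix (Fin D) (Fin D) ℂ) *
      (hP.1.eigenvectorUnitary : Matrix (Fin D) (Fin D) ℂ) = 1 := Unitary.coe_star_mul_self _
  have hspec := hP.1.spectral_theorem
  rw [Unitary.conjStarAlgAut_apply] at hspec
  conv_rhs => rw [hspec]
  unfold sqrt
  set U := (hP.1.eigenvectorUnitary : Matrix (Fin D) (Fin D) ℂ)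
  set Dg := diagonal (fun i => ((Real.sqrt (hP.1.eigenvalues i) : ℝ) : ℂ))
  have h1 : U * Dg * star U * (U * Dg * star U) = U * (Dg * Dg) * star U := by
    calc _ = U * Dg * (star U * U) * Dg * star U := by simp only [mul_assoc]
      _ = _ := by rw [hU, mul_one]; simp only [mul_assoc]
  rw [h1, diagonal_mul_diagonal]
  refine congrArg (fun M => U * M * star U) (congrArg diagonal (funext fun i => ?_))
  simp only [Function.comp_apply, ← Complex.ofReal_mul,
    Real.mul_self_sqrt (hP.eigenvalues_nonneg i)]
  rfl

lemma posSemidef_sqrt {P : Matrix (Fin D) (Fin D) ℂ} (hP : P.PosSemidef) :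
    hP.sqrt.PosSemidef := by
  unfold sqrt
  rw [star_eq_conjTranspose]
  apply PosSemidef.mul_mul_conjTranspose_same
  rw [posSemidef_diagonal_iff]
  intro i
  exact_mod_cast Real.sqrt_nonneg _

end Matrix.PosSemidef

lemma re_trace_mul_nonneg {P Q : Matrix (Fin D) (Fin D) ℂ}
    (hP : P.PosSemidef) (hQ : Q.PosSemidef) : 0 ≤ ((P * Q).trace).re := by
  set sp := hP.sqrt
  set sq := hQ.sqrt
  have hsp : sp * sp = P := hP.sqrt_mul_self
  have hsq : sq * sq = Q := hQ.sqrt_mul_self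
  have hspH : spᴴ = sp := hP.posSemidef_sqrt.isHermitian
  have hsqH : sqᴴ = sq := hQ.posSemidef_sqrt.isHermitian
  have m1 : (sp * sq)ᴴ * (sp * sq) = (sq * (sp * sp)) * sq := by
    rw [conjTranspose_mul, hspH, hsqH]; simp only [mul_assoc]
  have m2 : sq * (sq * (sp * sp)) = Q * P := by
    rw [← hsq, ← hsp]; simp only [mul_assoc]
  calc (0:ℝ) ≤ frob2 (sp * sq) := frob2_nonneg _
    _ = (((sp * sq)ᴴ * (sp * sq)).trace).re := (re_trace_ctm_self _).symm
    _ = (((sq * (sp * sp)) * sq).trace).re := by rw [m1]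
    _ = ((sq * (sq * (sp * sp))).trace).re := by rw [Matrix.trace_mul_comm]
    _ = ((Q * P).trace).re := by rw [m2]
    _ = ((P * Q).trace).re := by rw [Matrix.trace_mul_comm]

lemma re_trace_nonneg {P : Matrix (Fin D) (Fin D) ℂ} (hP : P.PosSemidef) :
    0 ≤ (P.trace).re := by
  have := re_trace_mul_nonneg hP (Matrix.PosSemidef.one (n := Fin D) (R := ℂ))
  simpa using this

lemma diag_bound {ρ a : Matrix (Fin D) (Fin D) ℂ} (hρ : ρ.PosSemidef)
    (ha : a.PosSemidef) (ha1 : ((1 : Matrix (Fin D) (Fin D) ℂ) - a).PosSemidef) :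
    ((a * ρ * a).trace).re ≤ ((ρ * a).trace).re := by
  set sa := ha.sqrt
  have hsa : sa * sa = a := ha.sqrt_mul_self
  have hsaH : saᴴ = sa := ha.posSemidef_sqrt.isHermitian
  have h1 : (a * ρ * a).trace = (ρ * (a * a)).trace := by
    rw [Matrix.trace_mul_cycle, Matrix.trace_mul_comm]
  have h2 : a - a * a = sa * ((1 : Matrix (Fin D) (Fin D) ℂ) - a) * sa := by
    have h3 : sa * a * sa = a * a := by
      rw [← hsa]; simp only [mul_assoc]
    rw [mul_sub, sub_mul, mul_one, hsa, h3]
  have h4 : (a - a * a).PosSemidef := by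
    rw [h2]
    have := ha1.mul_mul_conjTranspose_same sa
    rwa [hsaH] at this
  have h5 : 0 ≤ ((ρ * (a - a * a)).trace).re := re_trace_mul_nonneg hρ h4
  rw [mul_sub, Matrix.trace_sub, Complex.sub_re] at h5
  rw [h1]
  linarith

lemma offdiag_bound {ρ a b : Matrix (Fin D) (Fin D) ℂ} (hρ : ρ.PosSemidef)
    (ha : a.PosSemidef) (hb : b.PosSemidef) :
    ((a * ρ * b).trace).re ≤
      Real.sqrt (((ρ * a).trace).re * ((ρ * b).trace).re) *
        Real.sqrt (((a * b).trace).re) := by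
  set sr := hρ.sqrt
  set sa := ha.sqrt
  set sb := hb.sqrt
  have hsr : sr * sr = ρ := hρ.sqrt_mul_self
  have hsa : sa * sa = a := ha.sqrt_mul_self
  have hsb : sb * sb = b := hb.sqrt_mul_self
  have hsrH : srᴴ = sr := hρ.posSemidef_sqrt.isHermitian
  have hsaH : saᴴ = sa := ha.posSemidef_sqrt.isHermitian
  have hsbH : sbᴴ = sb := hb.posSemidef_sqrt.isHermitian
  have e1 : ((ρ * a).trace).re = frob2 (sa * sr) := by
    have m1 : (sa * sr)ᴴ * (sa * sr) = (sr * (sa * sa)) * sr := by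
      rw [conjTranspose_mul, hsaH, hsrH]; simp only [mul_assoc]
    have m2 : sr * (sr * (sa * sa)) = ρ * a := by
      rw [← hsr, ← hsa]; simp only [mul_assoc]
    calc ((ρ * a).trace).re = ((sr * (sr * (sa * sa))).trace).re := by rw [m2]
      _ = (((sr * (sa * sa)) * sr).trace).re := by rw [Matrix.trace_mul_comm]
      _ = (((sa * sr)ᴴ * (sa * sr)).trace).re := by rw [m1]
      _ = frob2 (sa * sr) := re_trace_ctm_self _
  have e2 : ((ρ * b).trace).re = frob2 (sr * sb) := by
    have m1 : (sr * sb)ᴴ * (sr * sb) = (sb * (sr * sr)) * sb := by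
      rw [conjTranspose_mul, hsrH, hsbH]; simp only [mul_assoc]
    have m2 : sb * (sb * (sr * sr)) = b * ρ := by
      rw [← hsr, ← hsb]; simp only [mul_assoc]
    calc ((ρ * b).trace).re = ((b * ρ).trace).re := by rw [Matrix.trace_mul_comm]
      _ = ((sb * (sb * (sr * sr))).trace).re := by rw [m2]
      _ = (((sb * (sr * sr)) * sb).trace).re := by rw [Matrix.trace_mul_comm]
      _ = (((sr * sb)ᴴ * (sr * sb)).trace).re := by rw [m1]
      _ = frob2 (sr * sb) := re_trace_ctm_self _
  have e3 : ((a * b).trace).re = frob2 (sa * sb) := by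
    have m1 : (sa * sb)ᴴ * (sa * sb) = (sb * (sa * sa)) * sb := by
      rw [conjTranspose_mul, hsaH, hsbH]; simp only [mul_assoc]
    have m2 : sb * (sb * (sa * sa)) = b * a := by
      rw [← hsa, ← hsb]; simp only [mul_assoc]
    calc ((a * b).trace).re = ((b * a).trace).re := by rw [Matrix.trace_mul_comm]
      _ = ((sb * (sb * (sa * sa))).trace).re := by rw [m2]
      _ = (((sb * (sa * sa)) * sb).trace).re := by rw [Matrix.trace_mul_comm]
      _ = (((sa * sb)ᴴ * (sa * sb)).trace).re := by rw [m1]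
      _ = frob2 (sa * sb) := re_trace_ctm_self _
  have e4 : (((sa * sb)ᴴ * ((sa * sr) * (sr * sb))).trace) = ((a * ρ * b).trace) := by
    have m1 : (sa * sb)ᴴ * ((sa * sr) * (sr * sb)) = sb * ((sa * (sa * (sr * sr))) * sb) := by
      rw [conjTranspose_mul, hsaH, hsbH]; simp only [mul_assoc]
    have m2 : (sa * (sa * (sr * sr))) * sb * sb = a * ρ * b := by
      rw [← hsr, ← hsa, ← hsb]; simp only [mul_assoc]
    calc ((sa * sb)ᴴ * ((sa * sr) * (sr * sb))).trace
        = (sb * ((sa * (sa * (sr * sr))) * sb)).trace := by rw [m1]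
      _ = (((sa * (sa * (sr * sr))) * sb) * sb).trace := by rw [Matrix.trace_mul_comm]
      _ = (a * ρ * b).trace := by rw [m2]
  have step1 : ((a * ρ * b).trace).re ≤ Real.sqrt (frob2 (sa * sb)) *
      Real.sqrt (frob2 ((sa * sr) * (sr * sb))) := by
    calc ((a * ρ * b).trace).re ≤ ‖(a * ρ * b).trace‖ := Complex.re_le_norm _
      _ = ‖((sa * sb)ᴴ * ((sa * sr) * (sr * sb))).trace‖ := by rw [e4]
      _ ≤ _ := abs_trace_ctm_le _ _
  have step2 : Real.sqrt (frob2 ((sa * sr) * (sr * sb))) ≤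
      Real.sqrt (frob2 (sa * sr) * frob2 (sr * sb)) :=
    Real.sqrt_le_sqrt (frob2_mul_le _ _)
  calc ((a * ρ * b).trace).re
      ≤ Real.sqrt (frob2 (sa * sb)) * Real.sqrt (frob2 ((sa * sr) * (sr * sb))) := step1
    _ ≤ Real.sqrt (frob2 (sa * sb)) * Real.sqrt (frob2 (sa * sr) * frob2 (sr * sb)) :=
        mul_le_mul_of_nonneg_left step2 (Real.sqrt_nonneg _)
    _ = Real.sqrt (((ρ * a).trace).re * ((ρ * b).trace).re) * Real.sqrt (((a * b).trace).re) := by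
        rw [e1, e2, e3, mul_comm]

lemma sum_split {n : ℕ} (g : Fin n → Fin n → ℝ) :
    ∑ y, ∑ y', g y y' = (∑ y, g y y) + ∑ p ∈ (univ : Finset (Fin n)).offDiag, g p.1 p.2 := by
  rw [← Finset.sum_product']
  rw [← Finset.diag_union_offDiag (univ : Finset (Fin n)),
    Finset.sum_union (Finset.disjoint_diag_offDiag _), Finset.sum_diag]

lemma core {n : ℕ} (hn : 1 ≤ n) (ρ : Matrix (Fin D) (Fin D) ℂ)
    (hρ : ρ.PosSemidef) (hρ1 : ρ.trace = 1)
    (A : Fin n → Matrix (Fin D) (Fin D) ℂ)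
    (hA : ∀ y, (A y).PosSemidef)
    (hA1 : ∀ y, ((1 : Matrix (Fin D) (Fin D) ℂ) - A y).PosSemidef) :
    ∑ y, ((ρ * A y).trace).re ≤
      1 + Real.sqrt (((n : ℝ) - 1) / (n : ℝ)) *
        Real.sqrt (∑ p ∈ (univ : Finset (Fin n)).offDiag, ((A p.1 * A p.2).trace).re) := by
  set t : Fin n → ℝ := fun y => ((ρ * A y).trace).re with ht
  set T := ∑ y, t y with hT
  set Q := ∑ p ∈ (univ : Finset (Fin n)).offDiag, ((A p.1 * A p.2).trace).re with hQ
  have ht0 : ∀ y, 0 ≤ t y := fun y => re_trace_mul_nonneg hρ (hA y)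
  have hQ0 : 0 ≤ Q :=
    Finset.sum_nonneg fun p _ => re_trace_mul_nonneg (hA p.1) (hA p.2)
  have hc0 : (0:ℝ) ≤ ((n : ℝ) - 1) / (n : ℝ) := by
    apply div_nonneg
    · have : (1:ℝ) ≤ (n:ℝ) := by exact_mod_cast hn
      linarith
    · positivity
  have hK0 : 0 ≤ Real.sqrt (((n : ℝ) - 1) / (n : ℝ)) * Real.sqrt Q :=
    mul_nonneg (Real.sqrt_nonneg _) (Real.sqrt_nonneg _)
  by_cases hT1 : T ≤ 1
  · linarith
  push_neg at hT1
  have hT0 : (0:ℝ) < T := lt_trans one_pos hT1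
  -- Step 1 : T^2 ≤ W
  set S := ∑ y, A y with hS
  have hSH : Sᴴ = S := by
    rw [hS, Matrix.conjTranspose_sum]
    exact Finset.sum_congr rfl fun y _ => (hA y).isHermitian
  set sr := hρ.sqrt
  have hsr : sr * sr = ρ := hρ.sqrt_mul_self
  have hsrH : srᴴ = sr := hρ.posSemidef_sqrt.isHermitian
  set W := ((S * ρ * S).trace).re with hW
  have hTS : T = ((ρ * S).trace).re := by
    rw [hT, hS, Finset.mul_sum, Matrix.trace_sum, Complex.re_sum]
  have hBC : srᴴ * (sr * S) = ρ * S := by rw [hsrH, ← mul_assoc, hsr]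
  have hfB : frob2 sr = 1 := by
    rw [← re_trace_ctm_self, hsrH, hsr, hρ1, Complex.one_re]
  have hCC : ((sr * S)ᴴ * (sr * S)).trace = (S * ρ * S).trace := by
    rw [conjTranspose_mul, hSH, hsrH]
    congr 1
    rw [← hsr]
    simp only [mul_assoc]
  have hfC : frob2 (sr * S) = W := by
    rw [← re_trace_ctm_self, hCC]
  have hTsqrt : T ≤ Real.sqrt W := by
    calc T = ((ρ * S).trace).re := hTS
      _ ≤ ‖(ρ * S).trace‖ := Complex.re_le_norm _
      _ = ‖(srᴴ * (sr * S)).trace‖ := by rw [hBC]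
      _ ≤ Real.sqrt (frob2 sr) * Real.sqrt (frob2 (sr * S)) := abs_trace_ctm_le _ _
      _ = Real.sqrt W := by rw [hfB, hfC, Real.sqrt_one, one_mul]
  have hW0 : 0 ≤ W := by rw [← hfC]; exact frob2_nonneg _
  have hTW : T^2 ≤ W := by
    calc T^2 ≤ Real.sqrt W ^ 2 := by
          apply pow_le_pow_left₀ (le_of_lt hT0) hTsqrt
      _ = W := Real.sq_sqrt hW0
  -- Step 2 : expand W
  have hWexp : W = (∑ y, ((A y * ρ * A y).trace).re) +
      ∑ p ∈ (univ : Finset (Fin n)).offDiag, ((A p.1 * ρ * A p.2).trace).re := by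
    have hmat : S * ρ * S = ∑ y, ∑ y', A y * ρ * A y' := by
      rw [hS, Finset.sum_mul, Finset.sum_mul_sum]
    rw [hW, hmat, Matrix.trace_sum, Complex.re_sum]
    have : ∀ y, ((∑ y', A y * ρ * A y').trace).re = ∑ y', ((A y * ρ * A y').trace).re := by
      intro y; rw [Matrix.trace_sum, Complex.re_sum]
    rw [Finset.sum_congr rfl fun y _ => this y]
    exact sum_split _
  -- Step 3 : diagonal
  have hdiag : ∑ y, ((A y * ρ * A y).trace).re ≤ T := by
    rw [hT]
    exact Finset.sum_le_sum fun y _ => diag_bound hρ (hA y) (hA1 y)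
  -- Step 4 : off-diagonal
  have hoff : ∑ p ∈ (univ : Finset (Fin n)).offDiag, ((A p.1 * ρ * A p.2).trace).re ≤
      Real.sqrt (∑ p ∈ (univ : Finset (Fin n)).offDiag, t p.1 * t p.2) * Real.sqrt Q := by
    have h1 : ∀ p ∈ (univ : Finset (Fin n)).offDiag, ((A p.1 * ρ * A p.2).trace).re ≤
        Real.sqrt (t p.1 * t p.2) * Real.sqrt (((A p.1 * A p.2).trace).re) := by
      intro p _
      exact offdiag_bound hρ (hA p.1) (hA p.2)
    calc ∑ p ∈ (univ : Finset (Fin n)).offDiag, ((A p.1 * ρ * A p.2).trace).re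
        ≤ ∑ p ∈ (univ : Finset (Fin n)).offDiag,
            Real.sqrt (t p.1 * t p.2) * Real.sqrt (((A p.1 * A p.2).trace).re) :=
          Finset.sum_le_sum h1
      _ ≤ Real.sqrt (∑ p ∈ (univ : Finset (Fin n)).offDiag, t p.1 * t p.2) *
            Real.sqrt (∑ p ∈ (univ : Finset (Fin n)).offDiag, ((A p.1 * A p.2).trace).re) := by
          apply Real.sum_sqrt_mul_sqrt_le
          · exact fun p => mul_nonneg (ht0 _) (ht0 _)
          · exact fun p => re_trace_mul_nonneg (hA _) (hA _)
      _ = _ := by rw [hQ]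
  -- Step 5 : ∑_off t t ≤ (n-1)/n T^2
  have hofft : ∑ p ∈ (univ : Finset (Fin n)).offDiag, t p.1 * t p.2 ≤ ((n:ℝ) - 1) / n * T^2 := by
    have hsq : T^2 = (∑ y, (t y)^2) + ∑ p ∈ (univ : Finset (Fin n)).offDiag, t p.1 * t p.2 := by
      have : T^2 = ∑ y, ∑ y', t y * t y' := by
        rw [hT, sq, Finset.sum_mul_sum]
      rw [this, sum_split fun y y' => t y * t y']
      congr 1
      exact Finset.sum_congr rfl fun y _ => (sq (t y)).symm
    have hcs : T^2 ≤ (n:ℝ) * ∑ y, (t y)^2 := by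
      have := sq_sum_le_card_mul_sum_sq (s := (univ : Finset (Fin n))) (f := t)
      simpa using this
    have hn0 : (0:ℝ) < (n:ℝ) := by positivity
    have h2 : T^2 / n ≤ ∑ y, (t y)^2 := by
      rw [div_le_iff₀ hn0]; linarith
    have h3 : ((n:ℝ) - 1) / n * T^2 = T^2 - T^2 / n := by
      field_simp
    linarith
  -- combine
  have hsq2 : Real.sqrt (∑ p ∈ (univ : Finset (Fin n)).offDiag, t p.1 * t p.2) ≤
      Real.sqrt (((n:ℝ) - 1) / n) * T := by
    calc Real.sqrt (∑ p ∈ (univ : Finset (Fin n)).offDiag, t p.1 * t p.2)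
        ≤ Real.sqrt (((n:ℝ) - 1) / n * T^2) := Real.sqrt_le_sqrt hofft
      _ = Real.sqrt (((n:ℝ) - 1) / n) * T := by
          rw [Real.sqrt_mul hc0, Real.sqrt_sq (le_of_lt hT0)]
  have final : T^2 ≤ T + (Real.sqrt (((n:ℝ) - 1) / n) * T) * Real.sqrt Q := by
    have := mul_le_mul_of_nonneg_right hsq2 (Real.sqrt_nonneg Q)
    linarith [hTW, hWexp ▸ le_refl W, hdiag, hoff,
      mul_le_mul_of_nonneg_right hsq2 (Real.sqrt_nonneg Q)]
  nlinarith [hT0, hK0]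

lemma pairsum {n d : ℕ} {y y' : Fin n} (h : y' ≠ y) (g : Fin d → Fin d → ℝ) :
    ∑ x : Fin n → Fin d, g (x y) (x y') = (d:ℝ)^(n-2) * ∑ a, ∑ b, g a b := by
  classical
  let e := Equiv.funSplitAt y (Fin d)
  have h1 : ∑ x : Fin n → Fin d, g (x y) (x y')
      = ∑ p : Fin d × ({j : Fin n // j ≠ y} → Fin d), g p.1 (p.2 ⟨y', h⟩) := by
    rw [← Equiv.sum_comp e.symm (fun x => g (x y) (x y'))]
    refine Finset.sum_congr rfl fun p _ => ?_
    congr 1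
    · simp [e]
    · simp [e, h]
  rw [h1, Fintype.sum_prod_type]
  have h2 : ∀ a : Fin d, ∑ u : {j : Fin n // j ≠ y} → Fin d, g a (u ⟨y', h⟩)
      = (d:ℝ)^(n-2) * ∑ b, g a b := by
    intro a
    set w : {j : Fin n // j ≠ y} := ⟨y', h⟩ with hw
    let e2 := Equiv.funSplitAt w (Fin d)
    have h3 : ∑ u : {j : Fin n // j ≠ y} → Fin d, g a (u w)
        = ∑ q : Fin d × ({k : {j : Fin n // j ≠ y} // k ≠ w} → Fin d), g a q.1 := by
      rw [← Equiv.sum_comp e2.symm (fun u => g a (u w))]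
      refine Finset.sum_congr rfl fun q _ => ?_
      congr 1
      simp [e2]
    have hcard : (Fintype.card ({k : {j : Fin n // j ≠ y} // k ≠ w} → Fin d)) = d^(n-2) := by
      have c1 : Fintype.card {j : Fin n // j ≠ y} = n - 1 := by
        rw [Fintype.card_subtype_compl, Fintype.card_subtype_eq, Fintype.card_fin]
      have c2 : Fintype.card {k : {j : Fin n // j ≠ y} // k ≠ w} =
          Fintype.card {j : Fin n // j ≠ y} - 1 := by
        rw [Fintype.card_subtype_compl, Fintype.card_subtype_eq]
      rw [Fintype.card_fun, Fintype.card_fin, c2, c1, Nat.sub_sub]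
    rw [h3, Fintype.sum_prod_type]
    have : ∀ b : Fin d, ∑ _v : ({k : {j : Fin n // j ≠ y} // k ≠ w} → Fin d), g a b
        = (d:ℝ)^(n-2) * g a b := by
      intro b
      rw [Finset.sum_const, Finset.card_univ, hcard, nsmul_eq_mul]
      push_cast
      ring
    rw [Finset.sum_congr rfl fun b _ => this b, ← Finset.mul_sum]
  rw [Finset.sum_congr rfl fun a _ => h2 a, ← Finset.mul_sum]

/-- **Result 2**: the average success probability of any quantum random access code with
`n` inputs from a `d`-letter alphabet and message dimension `D` is at most
`(1/n)·(1 + (n-1)·√D/d)`. -/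
theorem qrac_bound_two {n d D : ℕ} (hn : 1 ≤ n) (hd : 1 ≤ d) (hD : 1 ≤ D)
    (ρ : (Fin n → Fin d) → Matrix (Fin D) (Fin D) ℂ)
    (M : Fin n → Fin d → Matrix (Fin D) (Fin D) ℂ)
    (hρ : ∀ x, IsState (ρ x))
    (hM : ∀ y, IsPOVM (M y)) :
    (1 / ((n : ℝ) * (d : ℝ) ^ n)) *
        ∑ x : Fin n → Fin d, ∑ y : Fin n, ((ρ x * M y (x y)).trace).re
      ≤ (1 / (n : ℝ)) * (1 + ((n : ℝ) - 1) * Real.sqrt (D : ℝ) / (d : ℝ)) := by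
  classical
  have hA1 : ∀ (y : Fin n) (b : Fin d), ((1 : Matrix (Fin D) (Fin D) ℂ) - M y b).PosSemidef := by
    intro y b
    have he : (1 : Matrix (Fin D) (Fin D) ℂ) - M y b = ∑ b' ∈ Finset.univ.erase b, M y b' := by
      rw [← (hM y).2, ← Finset.add_sum_erase _ _ (Finset.mem_univ b)]
      exact add_sub_cancel_left _ _
    rw [he]
    exact Finset.sum_induction _ _ (fun a b ha hb => ha.add hb) Matrix.PosSemidef.zero
      (fun b' _ => (hM y).1 b')
  set c : ℝ := ((n:ℝ) - 1) / n with hc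
  set Q : (Fin n → Fin d) → ℝ := fun x =>
    ∑ p ∈ (univ : Finset (Fin n)).offDiag, ((M p.1 (x p.1) * M p.2 (x p.2)).trace).re with hQdef
  have hQ0 : ∀ x, 0 ≤ Q x := fun x =>
    Finset.sum_nonneg fun p _ => re_trace_mul_nonneg ((hM p.1).1 _) ((hM p.2).1 _)
  have hcore : ∀ x : Fin n → Fin d, ∑ y, ((ρ x * M y (x y)).trace).re
      ≤ 1 + Real.sqrt c * Real.sqrt (Q x) := fun x =>
    core hn (ρ x) (hρ x).1 (hρ x).2 (fun y => M y (x y)) (fun y => (hM y).1 _) (fun y => hA1 y _)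
  have hcardx : (Fintype.card (Fin n → Fin d) : ℝ) = (d:ℝ)^n := by
    rw [Fintype.card_fun, Fintype.card_fin, Fintype.card_fin]
    push_cast
    ring
  have hsumQ : ∑ x : Fin n → Fin d, Q x = ((n*n - n : ℕ):ℝ) * ((d:ℝ)^(n-2) * (D:ℝ)) := by
    rw [hQdef, Finset.sum_comm]
    have inner : ∀ p ∈ (univ : Finset (Fin n)).offDiag,
        (∑ x : Fin n → Fin d, ((M p.1 (x p.1) * M p.2 (x p.2)).trace).re)
          = (d:ℝ)^(n-2) * (D:ℝ) := by
      intro p hp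
      have hne : p.2 ≠ p.1 := (Finset.mem_offDiag.mp hp).2.2.symm
      rw [pairsum hne (fun a b => ((M p.1 a * M p.2 b).trace).re)]
      congr 1
      have hmat : ∑ a, ∑ b, (M p.1 a * M p.2 b) = (1 : Matrix (Fin D) (Fin D) ℂ) := by
        rw [← Finset.sum_mul_sum, (hM p.1).2, (hM p.2).2, one_mul]
      calc ∑ a, ∑ b, ((M p.1 a * M p.2 b).trace).re
          = ((∑ a, ∑ b, (M p.1 a * M p.2 b)).trace).re := by
            rw [Matrix.trace_sum, Complex.re_sum]
            refine Finset.sum_congr rfl fun a _ => ?_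
            rw [Matrix.trace_sum, Complex.re_sum]
        _ = (D:ℝ) := by
            rw [hmat, Matrix.trace_one]
            simp
    rw [Finset.sum_congr rfl inner, Finset.sum_const, Finset.offDiag_card,
      Finset.card_univ, Fintype.card_fin, nsmul_eq_mul]
  have h2 : ∑ x : Fin n → Fin d, Real.sqrt (Q x)
      ≤ Real.sqrt ((d:ℝ)^n) * Real.sqrt (∑ x : Fin n → Fin d, Q x) := by
    have h3 := Real.sum_sqrt_mul_sqrt_le (univ : Finset (Fin n → Fin d))
      (f := fun _ => (1:ℝ)) (g := Q) (fun _ => zero_le_one) hQ0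
    have h4 : ∑ x : Fin n → Fin d, (1:ℝ) = (d:ℝ)^n := by
      rw [Finset.sum_const, Finset.card_univ, nsmul_eq_mul, mul_one, hcardx]
    simpa [Real.sqrt_one, h4] using h3
  have hsum : ∑ x : Fin n → Fin d, ∑ y : Fin n, ((ρ x * M y (x y)).trace).re
      ≤ (d:ℝ)^n + Real.sqrt c *
        (Real.sqrt ((d:ℝ)^n) * Real.sqrt (((n*n - n : ℕ):ℝ) * ((d:ℝ)^(n-2) * (D:ℝ)))) := by
    calc ∑ x : Fin n → Fin d, ∑ y : Fin n, ((ρ x * M y (x y)).trace).re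
        ≤ ∑ x : Fin n → Fin d, (1 + Real.sqrt c * Real.sqrt (Q x)) :=
          Finset.sum_le_sum fun x _ => hcore x
      _ = (d:ℝ)^n + Real.sqrt c * ∑ x : Fin n → Fin d, Real.sqrt (Q x) := by
          rw [Finset.sum_add_distrib, ← Finset.mul_sum, Finset.sum_const, Finset.card_univ,
            nsmul_eq_mul, mul_one, hcardx]
      _ ≤ (d:ℝ)^n + Real.sqrt c *
            (Real.sqrt ((d:ℝ)^n) * Real.sqrt (∑ x : Fin n → Fin d, Q x)) := by
          have := mul_le_mul_of_nonneg_left h2 (Real.sqrt_nonneg c)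
          linarith
      _ = _ := by rw [hsumQ]
  have key : Real.sqrt c *
      (Real.sqrt ((d:ℝ)^n) * Real.sqrt (((n*n - n : ℕ):ℝ) * ((d:ℝ)^(n-2) * (D:ℝ))))
      ≤ ((n:ℝ) - 1) * ((d:ℝ)^(n-1) * Real.sqrt (D:ℝ)) := by
    rcases eq_or_lt_of_le hn with h1 | h1
    · -- n = 1
      have hn1 : n = 1 := h1.symm
      subst hn1
      have : c = 0 := by rw [hc]; norm_num
      rw [this, Real.sqrt_zero, zero_mul]
      norm_num
    · have hn2 : 2 ≤ n := h1
      have hd0 : (0:ℝ) ≤ (d:ℝ) := by positivity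
      have hn0 : (0:ℝ) < (n:ℝ) := by positivity
      have hn1R : (1:ℝ) ≤ (n:ℝ) := by exact_mod_cast hn
      have e0 : ((n*n - n : ℕ):ℝ) = (n:ℝ) * ((n:ℝ) - 1) := by
        have hle : n ≤ n*n := Nat.le_mul_of_pos_left n (by omega)
        rw [Nat.cast_sub hle]
        push_cast
        ring
      have hc0 : (0:ℝ) ≤ c := by
        rw [hc]; apply div_nonneg; linarith; linarith
      have harg0 : (0:ℝ) ≤ ((n*n - n : ℕ):ℝ) * ((d:ℝ)^(n-2) * (D:ℝ)) := by positivity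
      rw [← Real.sqrt_mul (by positivity : (0:ℝ) ≤ (d:ℝ)^n), ← Real.sqrt_mul hc0]
      have hnne : (n:ℝ) ≠ 0 := ne_of_gt hn0
      have erad : c * ((d:ℝ)^n * (((n*n - n : ℕ):ℝ) * ((d:ℝ)^(n-2) * (D:ℝ))))
          = (((n:ℝ) - 1) * ((d:ℝ)^(n-1)))^2 * (D:ℝ) := by
        have epow : (d:ℝ)^n * (d:ℝ)^(n-2) = ((d:ℝ)^(n-1))^2 := by
          rw [← pow_add, ← pow_mul]
          congr 1
          omega
        calc c * ((d:ℝ)^n * (((n*n - n : ℕ):ℝ) * ((d:ℝ)^(n-2) * (D:ℝ))))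
            = (((n:ℝ)-1)*((n:ℝ)-1)) * (((d:ℝ)^n * (d:ℝ)^(n-2)) * (D:ℝ)) * ((n:ℝ) / n) := by
              rw [e0, hc]; ring
          _ = (((n:ℝ)-1)*((n:ℝ)-1)) * (((d:ℝ)^n * (d:ℝ)^(n-2)) * (D:ℝ)) := by
              rw [div_self hnne, mul_one]
          _ = (((n:ℝ) - 1) * ((d:ℝ)^(n-1)))^2 * (D:ℝ) := by rw [epow]; ring
      rw [erad, Real.sqrt_mul (sq_nonneg _),
        Real.sqrt_sq (mul_nonneg (by linarith : (0:ℝ) ≤ (n:ℝ) - 1) (by positivity : (0:ℝ) ≤ (d:ℝ)^(n-1)))]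
      exact le_of_eq (by ring)
  -- final division
  have hdR : (0:ℝ) < (d:ℝ) := by exact_mod_cast hd
  have hnR : (0:ℝ) < (n:ℝ) := by exact_mod_cast hn
  have hfin : ∑ x : Fin n → Fin d, ∑ y : Fin n, ((ρ x * M y (x y)).trace).re
      ≤ (d:ℝ)^n + ((n:ℝ) - 1) * ((d:ℝ)^(n-1) * Real.sqrt (D:ℝ)) := le_trans hsum (by linarith)
  have hdn : (d:ℝ)^n = (d:ℝ)^(n-1) * d := by
    conv_lhs => rw [show n = (n-1)+1 by omega]
    rw [pow_succ]
  have hinv0 : (0:ℝ) ≤ 1 / ((n:ℝ) * (d:ℝ)^n) := by positivity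
  calc (1 / ((n : ℝ) * (d : ℝ) ^ n)) *
        ∑ x : Fin n → Fin d, ∑ y : Fin n, ((ρ x * M y (x y)).trace).re
      ≤ (1 / ((n : ℝ) * (d : ℝ) ^ n)) *
        ((d:ℝ)^n + ((n:ℝ) - 1) * ((d:ℝ)^(n-1) * Real.sqrt (D:ℝ))) :=
        mul_le_mul_of_nonneg_left hfin hinv0
    _ = (1 / (n : ℝ)) * (1 + ((n : ℝ) - 1) * Real.sqrt (D : ℝ) / (d : ℝ)) := by
        rw [hdn]
        have h1 : (d:ℝ) ≠ 0 := ne_of_gt hdR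
        have h2 : (n:ℝ) ≠ 0 := ne_of_gt hnR
        have h3 : (d:ℝ)^(n-1) ≠ 0 := pow_ne_zero _ h1
        field_simp
end

section
/- Let n ≥ 1, d ≥ 1, D ≥ 1, and for each y ∈ [n] let (M_{b|y})_{b∈[d]} be a d-outcome POVM on ℂ^D. For each x ∈ [d]^n define the traceless Hermitian operator O_x = Σ_{y=1}^n ( M_{x_y|y} − (Tr(M_{x_y|y})/D)·𝟙 ), where 𝟙 is the D×D identity. Then Σ_{x∈[d]^n} Tr(O_x²) ≤ (D-1) · n · d^{n-1}. -/
open scoped ComplexOrder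

section Aux

open Matrix Finset

lemma aux_sum_apply_eq {ι : Type*} [Fintype ι] [DecidableEq ι] {κ : Type*} [Fintype κ]
    {A : Type*} [AddCommMonoid A] (y : ι) (f : κ → A) :
    ∑ x : ι → κ, f (x y) = (Fintype.card κ) ^ (Fintype.card ι - 1) • ∑ b, f b := by
  classical
  rw [← Equiv.sum_comp (Equiv.piSplitAt y (fun _ => κ)).symm (fun x => f (x y))]
  simp only [Fintype.sum_prod_type, Equiv.piSplitAt_symm_apply, dif_pos rfl]
  simp [Finset.sum_const, Fintype.card_subtype_compl, Finset.smul_sum]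

lemma aux_sum_apply_eq₂ {ι : Type*} [Fintype ι] [DecidableEq ι] {κ : Type*} [Fintype κ]
    {A : Type*} [AddCommMonoid A] {y z : ι} (hyz : y ≠ z) (f : κ → κ → A) :
    ∑ x : ι → κ, f (x y) (x z) =
      (Fintype.card κ) ^ (Fintype.card ι - 2) • ∑ b, ∑ c, f b c := by
  classical
  rw [← Equiv.sum_comp (Equiv.piSplitAt y (fun _ => κ)).symm
    (fun x => f (x y) (x z))]
  simp only [Fintype.sum_prod_type, Equiv.piSplitAt_symm_apply, dif_pos rfl,
    dif_neg (Ne.symm hyz), dite_true]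
  have : ∀ b : κ, ∑ r : { j // j ≠ y } → κ, f b (r ⟨z, Ne.symm hyz⟩) =
      (Fintype.card κ) ^ (Fintype.card { j // j ≠ y } - 1) • ∑ c, f b c :=
    fun b => aux_sum_apply_eq _ _
  rw [Finset.sum_congr rfl (fun b _ => this b)]
  have hc : Fintype.card { j // j ≠ y } = Fintype.card ι - 1 := by
    simp [Fintype.card_subtype_compl]
  rw [hc, ← Finset.smul_sum]
  congr 1

variable {D : ℕ}

lemma aux_trace_eq {A : Matrix (Fin D) (Fin D) ℂ} (hA : A.IsHermitian) :
    A.trace = ∑ i, (hA.eigenvalues i : ℂ) := by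
  conv_lhs => rw [hA.spectral_theorem, Unitary.conjStarAlgAut_apply]
  rw [trace_mul_cycle, Unitary.coe_star_mul_self, one_mul, trace_diagonal]
  rfl

lemma aux_trace_sq_eq {A : Matrix (Fin D) (Fin D) ℂ} (hA : A.IsHermitian) :
    (A * A).trace = ∑ i, (hA.eigenvalues i : ℂ) ^ 2 := by
  set U : Matrix (Fin D) (Fin D) ℂ := (hA.eigenvectorUnitary : Matrix (Fin D) (Fin D) ℂ) with hU
  set B : Matrix (Fin D) (Fin D) ℂ := diagonal (RCLike.ofReal ∘ hA.eigenvalues) with hB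
  have h1 : (star U) * U = 1 := Unitary.coe_star_mul_self _
  have e : A * A = U * (B * (star U * U) * B * star U) := by
    conv_lhs => rw [hA.spectral_theorem, Unitary.conjStarAlgAut_apply]
    noncomm_ring
  rw [e, h1, mul_one, trace_mul_comm]
  have e2 : (B * B * star U) * U = B * B * (star U * U) := by noncomm_ring
  rw [e2, h1, mul_one, hB, diagonal_mul_diagonal, trace_diagonal]
  simp [pow_two]

lemma aux_psd_diag_nonneg {A : Matrix (Fin D) (Fin D) ℂ} (hA : A.PosSemidef) (i : Fin D) :
    0 ≤ A i i := by
  exact hA.diag_nonneg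

lemma aux_psd_sum {α : Type*} {s : Finset α} (f : α → Matrix (Fin D) (Fin D) ℂ)
    (h : ∀ a ∈ s, (f a).PosSemidef) : (∑ a ∈ s, f a).PosSemidef :=
  Finset.sum_induction f (fun m => m.PosSemidef) (fun _ _ ha hb => ha.add hb)
    Matrix.PosSemidef.zero h

lemma aux_eig_le_one {A : Matrix (Fin D) (Fin D) ℂ} (hA : A.PosSemidef)
    (h1 : (1 - A).PosSemidef) (i : Fin D) : hA.1.eigenvalues i ≤ 1 := by
  set U : Matrix (Fin D) (Fin D) ℂ := (hA.1.eigenvectorUnitary : Matrix (Fin D) (Fin D) ℂ)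
  have hN : (Uᴴ * (1 - A) * U).PosSemidef := h1.conjTranspose_mul_mul_same U
  have hUU : (star U) * U = 1 := Unitary.coe_star_mul_self _
  have hdiag : Uᴴ * (1 - A) * U = 1 - diagonal (RCLike.ofReal ∘ hA.1.eigenvalues) := by
    rw [Matrix.mul_sub, Matrix.sub_mul, Matrix.mul_one, ← Matrix.star_eq_conjTranspose, hUU,
      ← Unitary.conjStarAlgAut_star_apply (S := ℂ), hA.1.conjStarAlgAut_star_eigenvectorUnitary]
  rw [hdiag] at hN
  have h0 := aux_psd_diag_nonneg hN i
  simp only [Matrix.sub_apply, Matrix.one_apply_eq, diagonal_apply_eq, Function.comp_apply] at h0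
  have : (0:ℝ) ≤ 1 - hA.1.eigenvalues i := by
    have := Complex.le_def.mp h0
    simpa using this.1
  linarith

lemma aux_povm_bound {d : ℕ} (hD : 1 ≤ D) (N : Fin d → Matrix (Fin D) (Fin D) ℂ)
    (hN : IsPOVM N) :
    ∑ b, (((N b - ((N b).trace / (D:ℂ)) • 1) * (N b - ((N b).trace / (D:ℂ)) • 1)).trace).re
      ≤ (D : ℝ) - 1 := by
  have hD0 : (D : ℂ) ≠ 0 := by positivity
  have hDR : (0:ℝ) < D := by positivity
  set lam : Fin d → Fin D → ℝ := fun b => (hN.1 b).1.eigenvalues with hlam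
  have hnn : ∀ b i, 0 ≤ lam b i := fun b i => (hN.1 b).eigenvalues_nonneg i
  have hle1 : ∀ b i, lam b i ≤ 1 := by
    intro b i
    refine aux_eig_le_one (hN.1 b) ?_ i
    have : (1 : Matrix (Fin D) (Fin D) ℂ) - N b = ∑ c ∈ Finset.univ.erase b, N c := by
      rw [← hN.2, ← Finset.add_sum_erase _ _ (Finset.mem_univ b)]
      abel
    rw [this]
    exact aux_psd_sum _ (fun c _ => hN.1 c)
  have htr : ∀ b, (N b).trace = ((∑ i, lam b i : ℝ) : ℂ) := by
    intro b; rw [aux_trace_eq (hN.1 b).1]; push_cast; rfl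
  have htr2 : ∀ b, ((N b) * (N b)).trace = ((∑ i, (lam b i)^2 : ℝ) : ℂ) := by
    intro b; rw [aux_trace_sq_eq (hN.1 b).1]; push_cast; rfl
  have hval : ∀ b, (((N b - ((N b).trace / (D:ℂ)) • 1) *
      (N b - ((N b).trace / (D:ℂ)) • 1)).trace).re
      = ∑ i, (lam b i)^2 - (∑ i, lam b i)^2 / D := by
    intro b
    have expand : (N b - ((N b).trace / (D:ℂ)) • 1) * (N b - ((N b).trace / (D:ℂ)) • 1)
        = N b * N b - ((N b).trace / (D:ℂ)) • N b - ((N b).trace / (D:ℂ)) • N b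
          + (((N b).trace / (D:ℂ)) * ((N b).trace / (D:ℂ))) • (1 : Matrix (Fin D) (Fin D) ℂ) := by
      rw [Matrix.sub_mul, Matrix.mul_sub, Matrix.mul_sub]
      simp only [Matrix.smul_mul, Matrix.mul_smul, Matrix.one_mul, Matrix.mul_one, smul_smul]
      abel
    rw [expand]
    simp only [Matrix.trace_add, Matrix.trace_sub, Matrix.trace_smul, Matrix.trace_one,
      smul_eq_mul]
    rw [htr, htr2]
    have hcard : (Fintype.card (Fin D) : ℂ) = (D : ℂ) := by simp
    rw [hcard]
    have : ((∑ i, (lam b i)^2 : ℝ) : ℂ)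
        - ((∑ i, lam b i : ℝ):ℂ) / (D:ℂ) * ((∑ i, lam b i : ℝ):ℂ)
        - ((∑ i, lam b i : ℝ):ℂ) / (D:ℂ) * ((∑ i, lam b i : ℝ):ℂ)
        + ((∑ i, lam b i : ℝ):ℂ) / (D:ℂ) * (((∑ i, lam b i : ℝ):ℂ) / (D:ℂ)) * (D:ℂ)
        = ((∑ i, (lam b i)^2 - (∑ i, lam b i)^2 / D : ℝ) : ℂ) := by
      push_cast
      field_simp
      ring
    rw [this, Complex.ofReal_re]
  have hsum : ∑ b, ∑ i, lam b i = (D : ℝ) := by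
    have : ∑ b, (N b).trace = (D : ℂ) := by
      rw [← Matrix.trace_sum, hN.2, Matrix.trace_one]; simp
    rw [Finset.sum_congr rfl (fun b _ => htr b)] at this
    exact_mod_cast this
  have hfrac : (0:ℝ) ≤ 1 - 1/D := by
    have : (1:ℝ)/D ≤ 1 := by
      rw [div_le_one hDR]; exact_mod_cast hD
    linarith
  have key : ∀ b, ∑ i, (lam b i)^2 - (∑ i, lam b i)^2 / D
      ≤ (1 - 1/(D:ℝ)) * ∑ i, lam b i := by
    intro b
    have h1 : ∑ i, (lam b i)^2 ≤ (∑ i, lam b i)^2 := by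
      have : ∀ i : Fin D, (lam b i)^2 ≤ lam b i * ∑ j, lam b j := by
        intro i
        rw [pow_two]
        exact mul_le_mul_of_nonneg_left
          (Finset.single_le_sum (fun j _ => hnn b j) (Finset.mem_univ i)) (hnn b i)
      calc ∑ i, (lam b i)^2 ≤ ∑ i, lam b i * ∑ j, lam b j :=
            Finset.sum_le_sum (fun i _ => this i)
        _ = (∑ i, lam b i)^2 := by rw [← Finset.sum_mul, pow_two]
    have h2 : ∑ i, (lam b i)^2 ≤ ∑ i, lam b i :=
      Finset.sum_le_sum (fun i _ => by nlinarith [hnn b i, hle1 b i])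
    have h3 : (∑ i, (lam b i)^2) / D ≤ (∑ i, lam b i)^2 / D :=
      div_le_div_of_nonneg_right h1 hDR.le
    have h4 : (1 - 1/(D:ℝ)) * ∑ i, (lam b i)^2 ≤ (1 - 1/(D:ℝ)) * ∑ i, lam b i :=
      mul_le_mul_of_nonneg_left h2 hfrac
    have expand : (1 - 1/(D:ℝ)) * ∑ i, (lam b i)^2
        = ∑ i, (lam b i)^2 - (∑ i, (lam b i)^2) / D := by ring
    linarith
  calc ∑ b, (((N b - ((N b).trace / (D:ℂ)) • 1) *
        (N b - ((N b).trace / (D:ℂ)) • 1)).trace).re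
      = ∑ b, (∑ i, (lam b i)^2 - (∑ i, lam b i)^2 / D) :=
        Finset.sum_congr rfl (fun b _ => hval b)
    _ ≤ ∑ b, (1 - 1/(D:ℝ)) * ∑ i, lam b i := Finset.sum_le_sum (fun b _ => key b)
    _ = (1 - 1/(D:ℝ)) * ∑ b, ∑ i, lam b i := by rw [Finset.mul_sum]
    _ = (1 - 1/(D:ℝ)) * D := by rw [hsum]
    _ = (D:ℝ) - 1 := by field_simp

end Aux

/-- The key intermediate trace bound in the proof of Result 1: with
`O_x = Σ_y (M_{x_y|y} − (Tr(M_{x_y|y})/D)·𝟙)`, one has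
`Σ_x Tr(O_x²) ≤ (D-1)·n·d^(n-1)`. -/
theorem sum_trace_sq_Ox_le {n d D : ℕ} (hn : 1 ≤ n) (hd : 1 ≤ d) (hD : 1 ≤ D)
    (M : Fin n → Fin d → Matrix (Fin D) (Fin D) ℂ)
    (hM : ∀ y, IsPOVM (M y)) :
    ∑ x : Fin n → Fin d,
        (((∑ y : Fin n,
              (M y (x y) - ((M y (x y)).trace / (D : ℂ)) • (1 : Matrix (Fin D) (Fin D) ℂ))) *
          (∑ y : Fin n,
              (M y (x y) - ((M y (x y)).trace / (D : ℂ)) • (1 : Matrix (Fin D) (Fin D) ℂ)))).trace).re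
      ≤ ((D : ℝ) - 1) * (n : ℝ) * (d : ℝ) ^ (n - 1) := by
  classical
  set A : Fin n → Fin d → Matrix (Fin D) (Fin D) ℂ :=
    fun y b => M y b - ((M y b).trace / (D : ℂ)) • 1 with hAdef
  have hA0 : ∀ y, ∑ b, A y b = 0 := by
    intro y
    have htr : ∑ b, (M y b).trace = (D : ℂ) := by
      rw [← Matrix.trace_sum, (hM y).2, Matrix.trace_one]; simp
    have hD0 : (D : ℂ) ≠ 0 := by positivity
    simp only [hAdef, Finset.sum_sub_distrib, (hM y).2, ← Finset.sum_smul, ← Finset.sum_div, htr]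
    rw [div_self hD0, one_smul, sub_self]
  have expand : ∀ x : Fin n → Fin d,
      ((∑ y, A y (x y)) * (∑ y, A y (x y))).trace
        = ∑ y, ∑ z, (A y (x y) * A z (x z)).trace := by
    intro x
    rw [Finset.sum_mul_sum]
    simp only [Matrix.trace_sum]
  have step : ∀ y : Fin n, ∑ z, ∑ x : Fin n → Fin d, (A y (x y) * A z (x z)).trace
      = (d ^ (n-1) : ℕ) • ∑ b, (A y b * A y b).trace := by
    intro y
    rw [← Finset.add_sum_erase Finset.univ _ (Finset.mem_univ y)]
    have h0 : ∑ z ∈ Finset.univ.erase y,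
        ∑ x : Fin n → Fin d, (A y (x y) * A z (x z)).trace = 0 := by
      refine Finset.sum_eq_zero (fun z hz => ?_)
      have hne : y ≠ z := (Finset.ne_of_mem_erase hz).symm
      rw [aux_sum_apply_eq₂ hne (fun b c => (A y b * A z c).trace)]
      have h1 : ∑ b, ∑ c, (A y b * A z c).trace = ((∑ b, A y b) * (∑ c, A z c)).trace := by
        rw [Finset.sum_mul_sum]; simp only [Matrix.trace_sum]
      rw [h1, hA0, Matrix.zero_mul, Matrix.trace_zero, smul_zero]
    rw [h0, add_zero, aux_sum_apply_eq y (fun b => (A y b * A y b).trace)]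
    simp
  have main : ∑ x : Fin n → Fin d, ((∑ y, A y (x y)) * (∑ y, A y (x y))).trace
      = (d ^ (n-1) : ℕ) • ∑ y : Fin n, ∑ b, (A y b * A y b).trace := by
    rw [Finset.sum_congr rfl (fun x _ => expand x), Finset.sum_comm]
    rw [Finset.sum_congr rfl (fun y _ => Finset.sum_comm),
      Finset.sum_congr rfl (fun y _ => step y), ← Finset.smul_sum]
  have hyb : ∀ y : Fin n, (∑ b, (A y b * A y b).trace).re ≤ (D:ℝ) - 1 := by
    intro y
    rw [Complex.re_sum]
    exact aux_povm_bound hD (M y) (hM y)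
  have hdpow : (0:ℝ) ≤ (d:ℝ) ^ (n-1) := by positivity
  calc ∑ x : Fin n → Fin d, (((∑ y, A y (x y)) * (∑ y, A y (x y))).trace).re
      = (∑ x : Fin n → Fin d, ((∑ y, A y (x y)) * (∑ y, A y (x y))).trace).re := by
        rw [Complex.re_sum]
    _ = ((d ^ (n-1) : ℕ) • ∑ y : Fin n, ∑ b, (A y b * A y b).trace).re := by rw [main]
    _ = (d:ℝ) ^ (n-1) * ∑ y : Fin n, (∑ b, (A y b * A y b).trace).re := by
        rw [nsmul_eq_mul]
        have hcast : ((d ^ (n-1) : ℕ) : ℂ) = (((d:ℝ) ^ (n-1) : ℝ) : ℂ) := by push_cast; ring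
        rw [hcast, Complex.re_ofReal_mul, Complex.re_sum]
    _ ≤ (d:ℝ) ^ (n-1) * ∑ y : Fin n, ((D:ℝ) - 1) := by
        refine mul_le_mul_of_nonneg_left ?_ hdpow
        exact Finset.sum_le_sum (fun y _ => hyb y)
    _ = ((D : ℝ) - 1) * (n : ℝ) * (d : ℝ) ^ (n - 1) := by
        rw [Finset.sum_const]
        simp
        ring
end
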